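/- arXiv:math/0405243 — 7 statements merged into one kernel-verified Lean document; each statement's English description precedes it below -/
import Mathlib

section
/- Over ℂ with 0 < q < 1, the Noumi–Mimachi functional h : A(c,d) → ℂ, defined on the PBW basis by h(B^{m+1}A^n) = 0 = h((B*)^{m+1}A^n) and h(A^n) = (f(0)/f(n))·(c^{n+1} − (−d)^{n+1})/(c+d) where f(n) = q^{-2} − q^{2n}, satisfies the modular property h(xy) = h(y σ_mod(x)) for all x, y ∈ A(c,d), where σ_mod(A) = A, σ_mod(B) = q^{-2}B, σ_mod(B*) = q^2 B*. -/
/-- The defining relations of the Podleś quantum sphere coordinate algebra `A(c,d)`: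
`BA = q²AB`, `AB* = q²B*A`, `B*B = cd + (c-d)A - A²`, `BB* = cd + q²(c-d)A - q⁴A²`,
where the generators `A, B, B*` are the images of `0, 1, 2 : Fin 3`. -/
inductive PodlesRel (k : Type) [Field k] (q c d : k) :
    FreeAlgebra k (Fin 3) → FreeAlgebra k (Fin 3) → Prop
  | BA : PodlesRel k q c d (FreeAlgebra.ι k 1 * FreeAlgebra.ι k 0)
      (q ^ 2 • (FreeAlgebra.ι k 0 * FreeAlgebra.ι k 1))
  | ABs : PodlesRel k q c d (FreeAlgebra.ι k 0 * FreeAlgebra.ι k 2)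
      (q ^ 2 • (FreeAlgebra.ι k 2 * FreeAlgebra.ι k 0))
  | BsB : PodlesRel k q c d (FreeAlgebra.ι k 2 * FreeAlgebra.ι k 1)
      (algebraMap k (FreeAlgebra k (Fin 3)) (c * d) + (c - d) • FreeAlgebra.ι k 0 -
        FreeAlgebra.ι k 0 ^ 2)
  | BBs : PodlesRel k q c d (FreeAlgebra.ι k 1 * FreeAlgebra.ι k 2)
      (algebraMap k (FreeAlgebra k (Fin 3)) (c * d) + (q ^ 2 * (c - d)) • FreeAlgebra.ι k 0 -
        q ^ 4 • FreeAlgebra.ι k 0 ^ 2)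

/-- The Podleś quantum sphere coordinate algebra `A(c,d)`. -/
abbrev PodlesAlg (k : Type) [Field k] (q c d : k) := RingQuot (PodlesRel k q c d)

/-- The generator `A` of `A(c,d)`. -/
noncomputable def pA (k : Type) [Field k] (q c d : k) : PodlesAlg k q c d :=
  RingQuot.mkAlgHom k (PodlesRel k q c d) (FreeAlgebra.ι k 0)

/-- The generator `B` of `A(c,d)`. -/
noncomputable def pB (k : Type) [Field k] (q c d : k) : PodlesAlg k q c d :=
  RingQuot.mkAlgHom k (PodlesRel k q c d) (FreeAlgebra.ι k 1)

/-- The generator `B*` of `A(c,d)`. -/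
noncomputable def pBs (k : Type) [Field k] (q c d : k) : PodlesAlg k q c d :=
  RingQuot.mkAlgHom k (PodlesRel k q c d) (FreeAlgebra.ι k 2)

namespace NM

section Abstract
variable {k : Type} [Field k] {X : Type} [Ring X] [Algebra k X]

lemma c1 (q : k) (A B : X) (rBA : B * A = q ^ 2 • (A * B)) (j : ℕ) :
    B ^ j * A = (q ^ 2) ^ j • (A * B ^ j) := by
  induction j with
  | zero => simp
  | succ n ih =>
    rw [pow_succ', mul_assoc, ih, mul_smul_comm, ← mul_assoc, rBA]
    simp [smul_mul_assoc, smul_smul, pow_succ, mul_assoc, mul_comm]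

lemma c2 (q : k) (A Bs : X) (rABs : A * Bs = q ^ 2 • (Bs * A)) (j : ℕ) :
    A * Bs ^ j = (q ^ 2) ^ j • (Bs ^ j * A) := by
  induction j with
  | zero => simp
  | succ n ih =>
    rw [pow_succ, ← mul_assoc, ih, smul_mul_assoc, mul_assoc, rABs]
    simp [mul_smul_comm, smul_smul, pow_succ, mul_assoc, mul_comm]

lemma c3 (q : k) (A B : X) (rBA : B * A = q ^ 2 • (A * B)) (n : ℕ) :
    B * A ^ n = (q ^ 2) ^ n • (A ^ n * B) := by
  induction n with
  | zero => simp
  | succ m ih =>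
    rw [pow_succ', ← mul_assoc, rBA, smul_mul_assoc, mul_assoc, ih]
    simp [mul_smul_comm, smul_smul, pow_succ, mul_assoc, mul_comm]

lemma c4 (q : k) (A Bs : X) (rABs : A * Bs = q ^ 2 • (Bs * A)) (n : ℕ) :
    A ^ n * Bs = (q ^ 2) ^ n • (Bs * A ^ n) := by
  induction n with
  | zero => simp
  | succ m ih =>
    rw [pow_succ, mul_assoc, rABs, mul_smul_comm, ← mul_assoc, ih]
    simp [smul_mul_assoc, smul_smul, pow_succ, mul_assoc, mul_comm]

lemma c1' (q : k) (hq : q ≠ 0) (A B : X) (rBA : B * A = q ^ 2 • (A * B)) (j : ℕ) :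
    A * B ^ j = ((q ^ 2) ^ j)⁻¹ • (B ^ j * A) := by
  rw [c1 q A B rBA j, smul_smul, inv_mul_cancel₀ (pow_ne_zero _ (pow_ne_zero _ hq)), one_smul]

lemma c3' (q : k) (hq : q ≠ 0) (A B : X) (rBA : B * A = q ^ 2 • (A * B)) (n : ℕ) :
    A ^ n * B = ((q ^ 2) ^ n)⁻¹ • (B * A ^ n) := by
  rw [c3 q A B rBA n, smul_smul, inv_mul_cancel₀ (pow_ne_zero _ (pow_ne_zero _ hq)), one_smul]

end Abstract

section Rel
variable {k : Type} [Field k] {q c d : k}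

lemma rBA : pB k q c d * pA k q c d = q ^ 2 • (pA k q c d * pB k q c d) := by
  have := RingQuot.mkAlgHom_rel k (PodlesRel.BA (k := k) (q := q) (c := c) (d := d))
  simpa [pA, pB, map_mul, map_smul] using this

lemma rABs : pA k q c d * pBs k q c d = q ^ 2 • (pBs k q c d * pA k q c d) := by
  have := RingQuot.mkAlgHom_rel k (PodlesRel.ABs (k := k) (q := q) (c := c) (d := d))
  simpa [pA, pBs, map_mul, map_smul] using this

lemma rBsB : pBs k q c d * pB k q c d =
    algebraMap k _ (c * d) + (c - d) • pA k q c d - (pA k q c d) ^ 2 := by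
  have := RingQuot.mkAlgHom_rel k (PodlesRel.BsB (k := k) (q := q) (c := c) (d := d))
  simpa [pA, pB, pBs, map_mul, map_smul, map_add, map_sub, map_pow,
    AlgHom.commutes] using this

lemma rBBs : pB k q c d * pBs k q c d =
    algebraMap k _ (c * d) + (q ^ 2 * (c - d)) • pA k q c d - q ^ 4 • (pA k q c d) ^ 2 := by
  have := RingQuot.mkAlgHom_rel k (PodlesRel.BBs (k := k) (q := q) (c := c) (d := d))
  simpa [pA, pB, pBs, map_mul, map_smul, map_add, map_sub, map_pow,
    AlgHom.commutes] using this

end Rel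
end NM
namespace NM2
section Abstract2
variable {k : Type} [Field k] {X : Type} [Ring X] [Algebra k X]
variable (q c d : k) (A B Bs : X)
variable (rBA : B * A = q ^ 2 • (A * B)) (rABs : A * Bs = q ^ 2 • (Bs * A))
variable (rBsB : Bs * B = algebraMap k X (c * d) + (c - d) • A - A ^ 2)
variable (rBBs : B * Bs = algebraMap k X (c * d) + (q ^ 2 * (c - d)) • A - q ^ 4 • A ^ 2)

section
include rABs

lemma eA_Bs (m n : ℕ) : A * (Bs ^ m * A ^ n) = (q ^ 2) ^ m • (Bs ^ m * A ^ (n + 1)) := by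
  rw [← mul_assoc, NM.c2 q A Bs rABs m, smul_mul_assoc, mul_assoc, ← pow_succ']

lemma eA2_Bs (m n : ℕ) :
    A ^ 2 * (Bs ^ m * A ^ n) = ((q ^ 2) ^ m * (q ^ 2) ^ m) • (Bs ^ m * A ^ (n + 2)) := by
  rw [sq, mul_assoc, eA_Bs q A Bs rABs m n, mul_smul_comm, eA_Bs q A Bs rABs m (n + 1),
    smul_smul]

end

section
include rBA

lemma eA_B (hq : q ≠ 0) (m n : ℕ) :
    A * (B ^ m * A ^ n) = ((q ^ 2) ^ m)⁻¹ • (B ^ m * A ^ (n + 1)) := by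
  rw [← mul_assoc, NM.c1' q hq A B rBA m, smul_mul_assoc, mul_assoc, ← pow_succ']

lemma eA2_B (hq : q ≠ 0) (m n : ℕ) :
    A ^ 2 * (B ^ m * A ^ n) =
      (((q ^ 2) ^ m)⁻¹ * ((q ^ 2) ^ m)⁻¹) • (B ^ m * A ^ (n + 2)) := by
  rw [sq, mul_assoc, eA_B q A B rBA hq m n, mul_smul_comm, eA_B q A B rBA hq m (n + 1),
    smul_smul]

end

include rABs rBBs in
lemma eBBs (m n : ℕ) : B * (Bs ^ (m + 1) * A ^ n) =
    (c * d) • (Bs ^ m * A ^ n) + (q ^ 2 * (c - d) * (q ^ 2) ^ m) • (Bs ^ m * A ^ (n + 1)) -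
      (q ^ 4 * ((q ^ 2) ^ m * (q ^ 2) ^ m)) • (Bs ^ m * A ^ (n + 2)) := by
  rw [pow_succ', mul_assoc, ← mul_assoc B, rBBs, sub_mul, add_mul, ← Algebra.smul_def,
    smul_mul_assoc, smul_mul_assoc, eA_Bs q A Bs rABs m n, eA2_Bs q A Bs rABs m n,
    smul_smul, smul_smul]

include rBA rBsB in
lemma eBsB (hq : q ≠ 0) (m n : ℕ) : Bs * (B ^ (m + 1) * A ^ n) =
    (c * d) • (B ^ m * A ^ n) + ((c - d) * ((q ^ 2) ^ m)⁻¹) • (B ^ m * A ^ (n + 1)) -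
      (((q ^ 2) ^ m)⁻¹ * ((q ^ 2) ^ m)⁻¹) • (B ^ m * A ^ (n + 2)) := by
  rw [pow_succ', mul_assoc, ← mul_assoc Bs, rBsB, sub_mul, add_mul, ← Algebra.smul_def,
    smul_mul_assoc, eA_B q A B rBA hq m n, eA2_B q A B rBA hq m n, smul_smul]

include rBA in
lemma eB_right (hq : q ≠ 0) (Z : X) (n : ℕ) :
    (Z * A ^ n) * B = ((q ^ 2) ^ n)⁻¹ • (Z * (B * A ^ n)) := by
  rw [mul_assoc, NM.c3' q hq A B rBA n, mul_smul_comm]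

include rABs in
lemma eBs_right (Z : X) (n : ℕ) :
    (Z * A ^ n) * Bs = (q ^ 2) ^ n • (Z * (Bs * A ^ n)) := by
  rw [mul_assoc, NM.c4 q A Bs rABs n, mul_smul_comm]

-- (Bs^(m+1) * A^n) * B after moving B left
include rBA rBsB in
lemma eBsB_right (hq : q ≠ 0) (m n : ℕ) : (Bs ^ (m + 1) * A ^ n) * B =
    ((q ^ 2) ^ n)⁻¹ • ((c * d) • (Bs ^ m * A ^ n) + (c - d) • (Bs ^ m * A ^ (n + 1)) -
      Bs ^ m * A ^ (n + 2)) := by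
  rw [eB_right q A B rBA hq _ n]
  congr 1
  have hA2 : A ^ 2 * A ^ n = A ^ (n + 2) := by rw [← pow_add, add_comm]
  rw [pow_succ, mul_assoc, ← mul_assoc Bs, rBsB, sub_mul, add_mul, ← Algebra.smul_def,
    smul_mul_assoc, mul_sub, mul_add, mul_smul_comm, mul_smul_comm, ← pow_succ', hA2]

include rABs rBBs in
lemma eBBs_right (m n : ℕ) : (B ^ (m + 1) * A ^ n) * Bs =
    (q ^ 2) ^ n • ((c * d) • (B ^ m * A ^ n) + (q ^ 2 * (c - d)) • (B ^ m * A ^ (n + 1)) -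
      q ^ 4 • (B ^ m * A ^ (n + 2))) := by
  rw [eBs_right q A Bs rABs _ n]
  congr 1
  have hA2 : A ^ 2 * A ^ n = A ^ (n + 2) := by rw [← pow_add, add_comm]
  rw [pow_succ, mul_assoc, ← mul_assoc B, rBBs, sub_mul, add_mul, ← Algebra.smul_def,
    smul_mul_assoc, smul_mul_assoc, mul_sub, mul_add, mul_smul_comm, mul_smul_comm,
    mul_smul_comm, ← pow_succ', hA2]

end Abstract2
end NM2
namespace NM
section Span
variable {k : Type} [Field k] (q c d : k)

/-- The PBW spanning set of `A(c,d)`. -/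
def NMset : Set (PodlesAlg k q c d) :=
  {x | (∃ j n, x = pB k q c d ^ j * pA k q c d ^ n) ∨
    (∃ j n, x = pBs k q c d ^ j * pA k q c d ^ n)}

variable {q c d}

lemma memB (j n : ℕ) : pB k q c d ^ j * pA k q c d ^ n ∈ Submodule.span k (NMset q c d) :=
  Submodule.subset_span (Or.inl ⟨j, n, rfl⟩)

lemma memBs (j n : ℕ) : pBs k q c d ^ j * pA k q c d ^ n ∈ Submodule.span k (NMset q c d) :=
  Submodule.subset_span (Or.inr ⟨j, n, rfl⟩)

lemma stepA (hq : q ≠ 0) {s : PodlesAlg k q c d} (hs : s ∈ Submodule.span k (NMset q c d)) :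
    pA k q c d * s ∈ Submodule.span k (NMset q c d) := by
  induction hs using Submodule.span_induction with
  | mem x hx =>
    rcases hx with ⟨j, n, rfl⟩ | ⟨j, n, rfl⟩
    · rw [NM2.eA_B q _ _ rBA hq j n]
      exact Submodule.smul_mem _ _ (memB j (n + 1))
    · rw [NM2.eA_Bs q _ _ rABs j n]
      exact Submodule.smul_mem _ _ (memBs j (n + 1))
  | zero => simpa using Submodule.zero_mem _
  | add x y hx hy ihx ihy => rw [mul_add]; exact Submodule.add_mem _ ihx ihy
  | smul a x hx ihx => rw [mul_smul_comm]; exact Submodule.smul_mem _ _ ihx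

lemma stepB (hq : q ≠ 0) {s : PodlesAlg k q c d} (hs : s ∈ Submodule.span k (NMset q c d)) :
    pB k q c d * s ∈ Submodule.span k (NMset q c d) := by
  induction hs using Submodule.span_induction with
  | mem x hx =>
    rcases hx with ⟨j, n, rfl⟩ | ⟨j, n, rfl⟩
    · rw [← mul_assoc, ← pow_succ']
      exact memB (j + 1) n
    · match j with
      | 0 => simpa using memB 1 n
      | m + 1 =>
        rw [NM2.eBBs q c d _ _ _ rABs rBBs m n]
        exact Submodule.sub_mem _
          (Submodule.add_mem _ (Submodule.smul_mem _ _ (memBs m n))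
            (Submodule.smul_mem _ _ (memBs m (n + 1))))
          (Submodule.smul_mem _ _ (memBs m (n + 2)))
  | zero => simpa using Submodule.zero_mem _
  | add x y hx hy ihx ihy => rw [mul_add]; exact Submodule.add_mem _ ihx ihy
  | smul a x hx ihx => rw [mul_smul_comm]; exact Submodule.smul_mem _ _ ihx

lemma stepBs (hq : q ≠ 0) {s : PodlesAlg k q c d} (hs : s ∈ Submodule.span k (NMset q c d)) :
    pBs k q c d * s ∈ Submodule.span k (NMset q c d) := by
  induction hs using Submodule.span_induction with
  | mem x hx =>
    rcases hx with ⟨j, n, rfl⟩ | ⟨j, n, rfl⟩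
    · match j with
      | 0 => simpa using memBs 1 n
      | m + 1 =>
        rw [NM2.eBsB q c d _ _ _ rBA rBsB hq m n]
        exact Submodule.sub_mem _
          (Submodule.add_mem _ (Submodule.smul_mem _ _ (memB m n))
            (Submodule.smul_mem _ _ (memB m (n + 1))))
          (Submodule.smul_mem _ _ (memB m (n + 2)))
    · rw [← mul_assoc, ← pow_succ']
      exact memBs (j + 1) n
  | zero => simpa using Submodule.zero_mem _
  | add x y hx hy ihx ihy => rw [mul_add]; exact Submodule.add_mem _ ihx ihy
  | smul a x hx ihx => rw [mul_smul_comm]; exact Submodule.smul_mem _ _ ihx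

lemma span_top (hq : q ≠ 0) : Submodule.span k (NMset q c d) = ⊤ := by
  rw [Submodule.eq_top_iff']
  intro x
  obtain ⟨w, rfl⟩ := RingQuot.mkAlgHom_surjective k (PodlesRel k q c d) x
  have key : ∀ w : FreeAlgebra k (Fin 3), ∀ s ∈ Submodule.span k (NMset q c d),
      RingQuot.mkAlgHom k (PodlesRel k q c d) w * s ∈ Submodule.span k (NMset q c d) := by
    intro w
    induction w using FreeAlgebra.induction with
    | grade0 r =>
      intro s hs
      rw [AlgHom.commutes, ← Algebra.smul_def]
      exact Submodule.smul_mem _ _ hs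
    | grade1 x =>
      intro s hs
      fin_cases x
      · exact stepA hq hs
      · exact stepB hq hs
      · exact stepBs hq hs
    | mul a b iha ihb =>
      intro s hs
      rw [map_mul, mul_assoc]
      exact iha _ (ihb _ hs)
    | add a b iha ihb =>
      intro s hs
      rw [map_add, add_mul]
      exact Submodule.add_mem _ (iha _ hs) (ihb _ hs)
  have h1 : (1 : PodlesAlg k q c d) ∈ Submodule.span k (NMset q c d) := by
    simpa using memB (q := q) (c := c) (d := d) 0 0
  simpa using key w 1 h1

end Span
end NM
namespace NM
noncomputable def Hval (Q c d : ℂ) (n : ℕ) : ℂ :=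
  ((Q ^ (-2 : ℤ) - 1) / (Q ^ (-2 : ℤ) - Q ^ (2 * n))) * ((c ^ (n + 1) - (-d) ^ (n + 1)) / (c + d))

lemma key0 (u v a b c d : ℂ) (hcd : c + d ≠ 0)
    (h0 : 1 - u * v ≠ 0) (h1 : 1 - u * (v * u) ≠ 0) (h2 : 1 - u * (v * (u * u)) ≠ 0) :
    u * v * (c * d * ((1 - u) / (1 - u * v) * ((a - b) / (c + d)))
      + u * (c - d) * ((1 - u) / (1 - u * (v * u)) * ((a * c - b * -d) / (c + d)))
      - u * u * ((1 - u) / (1 - u * (v * (u * u))) * ((a * (c * c) - b * (-d * -d)) / (c + d)))) =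
    c * d * ((1 - u) / (1 - u * v) * ((a - b) / (c + d)))
      + (c - d) * ((1 - u) / (1 - u * (v * u)) * ((a * c - b * -d) / (c + d)))
      - ((1 - u) / (1 - u * (v * (u * u))) * ((a * (c * c) - b * (-d * -d)) / (c + d))) := by
  have h1' : 1 - u ^ 2 * v ≠ 0 := by convert h1 using 1; ring
  have h2' : 1 - u ^ 3 * v ≠ 0 := by convert h2 using 1; ring
  field_simp
  ring

lemma econv (u w : ℂ) (hu : u ≠ 0) : (u⁻¹ - 1) / (u⁻¹ - w) = (1 - u) / (1 - u * w) := by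
  rw [show (1 : ℂ) - u = u * (u⁻¹ - 1) by rw [mul_sub, mul_inv_cancel₀ hu]; ring,
    show (1 : ℂ) - u * w = u * (u⁻¹ - w) by rw [mul_sub, mul_inv_cancel₀ hu],
    mul_div_mul_left _ _ hu]

lemma oneSubNe (q : ℝ) (hq0 : 0 < q) (hq1 : q < 1) (n : ℕ) :
    (1 : ℂ) - (q : ℂ) ^ 2 * (q : ℂ) ^ (2 * n) ≠ 0 := by
  have hr : ((q : ℝ)) ^ 2 * q ^ (2 * n) < 1 := by
    have h1 : q ^ (2 * n) ≤ 1 := pow_le_one₀ hq0.le hq1.le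
    have h2 : q ^ 2 < 1 := by nlinarith
    nlinarith [pow_pos hq0 (2 * n), pow_pos hq0 2]
  have : (1 : ℂ) - (q : ℂ) ^ 2 * (q : ℂ) ^ (2 * n) =
      ((1 - q ^ 2 * q ^ (2 * n) : ℝ) : ℂ) := by push_cast; ring
  rw [this]
  exact_mod_cast (by linarith : (0:ℝ) < 1 - q ^ 2 * q ^ (2 * n)).ne'

lemma key (q : ℝ) (hq0 : 0 < q) (hq1 : q < 1) (c d : ℂ) (hcd : c + d ≠ 0) (n : ℕ) :
    (q : ℂ) ^ (2 + 2 * n) *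
      (c * d * Hval q c d n + (q : ℂ) ^ 2 * (c - d) * Hval q c d (n + 1) -
        (q : ℂ) ^ 4 * Hval q c d (n + 2)) =
    c * d * Hval q c d n + (c - d) * Hval q c d (n + 1) - Hval q c d (n + 2) := by
  have hQ : (q : ℂ) ≠ 0 := by exact_mod_cast hq0.ne'
  have hu : ((q : ℂ)) ^ 2 ≠ 0 := pow_ne_zero _ hQ
  have e0 : (q : ℂ) ^ (-2 : ℤ) = ((q : ℂ) ^ 2)⁻¹ := by
    rw [zpow_neg]; norm_cast
  have e1 : ((q : ℂ)) ^ (2 * (n + 1)) = (q : ℂ) ^ (2 * n) * (q : ℂ) ^ 2 := by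
    rw [show 2 * (n + 1) = 2 * n + 2 from by ring, pow_add]
  have e2 : ((q : ℂ)) ^ (2 * (n + 2)) = (q : ℂ) ^ (2 * n) * ((q : ℂ) ^ 2 * (q : ℂ) ^ 2) := by
    rw [show 2 * (n + 2) = 2 * n + (2 + 2) from by ring, pow_add, pow_add]
  have e3 : ((q : ℂ)) ^ (2 + 2 * n) = (q : ℂ) ^ 2 * (q : ℂ) ^ (2 * n) := by rw [← pow_add]
  have e4 : ((q : ℂ)) ^ 4 = (q : ℂ) ^ 2 * (q : ℂ) ^ 2 := by ring
  have ec1 : c ^ (n + 1 + 1) = c ^ (n + 1) * c := pow_succ c (n + 1)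
  have ec2 : c ^ (n + 2 + 1) = c ^ (n + 1) * (c * c) := by
    rw [show n + 2 + 1 = n + 1 + 2 from by ring, pow_add, pow_two]
  have ed1 : (-d) ^ (n + 1 + 1) = (-d) ^ (n + 1) * (-d) := pow_succ (-d) (n + 1)
  have ed2 : (-d) ^ (n + 2 + 1) = (-d) ^ (n + 1) * (-d * -d) := by
    rw [show n + 2 + 1 = n + 1 + 2 from by ring, pow_add, pow_two]
  simp only [Hval, e0, e1, e2, e3, e4, ec1, ec2, ed1, ed2]
  rw [econv _ _ hu, econv _ _ hu, econv _ _ hu]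
  have h0 := oneSubNe q hq0 hq1 n
  have h1 : (1 : ℂ) - (q : ℂ) ^ 2 * ((q : ℂ) ^ (2 * n) * (q : ℂ) ^ 2) ≠ 0 := by
    have h := oneSubNe q hq0 hq1 (n + 1)
    rwa [e1] at h
  have h2 : (1 : ℂ) - (q : ℂ) ^ 2 * ((q : ℂ) ^ (2 * n) * ((q : ℂ) ^ 2 * (q : ℂ) ^ 2)) ≠ 0 := by
    have h := oneSubNe q hq0 hq1 (n + 2)
    rwa [e2] at h
  exact key0 ((q : ℂ) ^ 2) ((q : ℂ) ^ (2 * n)) (c ^ (n + 1)) ((-d) ^ (n + 1)) c d hcd h0 h1 h2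
end NM
namespace NM
section Main
variable (q : ℝ) (c d : ℂ)

local notation "Q" => ((q : ℂ))
local notation "AA" => pA ℂ ((q : ℂ)) c d
local notation "BB" => pB ℂ ((q : ℂ)) c d
local notation "SS" => pBs ℂ ((q : ℂ)) c d

variable (hq0 : 0 < q) (hq1 : q < 1)
variable (h : PodlesAlg ℂ ((q : ℂ)) c d →ₗ[ℂ] ℂ)

include hq0 in
lemma hQne : (Q) ≠ 0 := by exact_mod_cast hq0.ne'

set_option maxHeartbeats 1000000 in
include hq0 in
lemma hA_comm
    (hhB : ∀ m n : ℕ, h (BB ^ (m + 1) * AA ^ n) = 0)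
    (hhBs : ∀ m n : ℕ, h (SS ^ (m + 1) * AA ^ n) = 0) :
    ∀ y, h (AA * y) = h (y * AA) := by
  have hQ : (Q) ≠ 0 := hQne q hq0
  intro y
  have hy : y ∈ Submodule.span ℂ (NMset ((q : ℂ)) c d) := by
    rw [span_top hQ]; trivial
  induction hy using Submodule.span_induction with
  | mem x hx =>
    rcases hx with ⟨j, n, rfl⟩ | ⟨j, n, rfl⟩
    · rw [NM2.eA_B (Q) AA BB rBA hQ j n, map_smul, smul_eq_mul, mul_assoc, ← pow_succ]
      cases j with
      | zero => simp
      | succ m => rw [hhB m (n + 1)]; simp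
    · rw [NM2.eA_Bs (Q) AA SS rABs j n, map_smul, smul_eq_mul, mul_assoc, ← pow_succ]
      cases j with
      | zero => simp
      | succ m => rw [hhBs m (n + 1)]; simp
  | zero => simp
  | add x y hx hy ihx ihy => rw [mul_add, add_mul, map_add, map_add, ihx, ihy]
  | smul a x hx ihx => rw [mul_smul_comm, smul_mul_assoc, map_smul, map_smul, ihx]

set_option maxHeartbeats 1000000 in
include hq0 hq1 in
lemma hB_comm (hcd : c + d ≠ 0)
    (hhB : ∀ m n : ℕ, h (BB ^ (m + 1) * AA ^ n) = 0)
    (hhBs : ∀ m n : ℕ, h (SS ^ (m + 1) * AA ^ n) = 0)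
    (hhA : ∀ n : ℕ, h (AA ^ n) = Hval (Q) c d n) :
    ∀ y, h (BB * y) = (Q) ^ (-2 : ℤ) * h (y * BB) := by
  have hQ : (Q) ≠ 0 := hQne q hq0
  have hu : ((Q)) ^ 2 ≠ 0 := pow_ne_zero _ hQ
  have e0 : (Q) ^ (-2 : ℤ) = ((Q) ^ 2)⁻¹ := by rw [zpow_neg]; norm_cast
  intro y
  have hy : y ∈ Submodule.span ℂ (NMset ((q : ℂ)) c d) := by
    rw [span_top hQ]; trivial
  induction hy using Submodule.span_induction with
  | mem x hx =>
    rcases hx with ⟨j, n, rfl⟩ | ⟨j, n, rfl⟩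
    · rw [← mul_assoc, ← pow_succ', hhB j n,
        NM2.eB_right (Q) AA BB rBA hQ (BB ^ j) n, map_smul, smul_eq_mul,
        show BB ^ j * (BB * AA ^ n) = BB ^ (j + 1) * AA ^ n from by
          rw [← mul_assoc, ← pow_succ],
        hhB j n]
      ring
    · match j with
      | 0 =>
        have hBn : h (BB * AA ^ n) = 0 := by simpa using hhB 0 n
        rw [pow_zero, one_mul, NM.c3' (Q) hQ AA BB rBA n, map_smul, smul_eq_mul, hBn]
        ring
      | m + 1 =>
        rw [NM2.eBBs (Q) c d AA BB SS rABs rBBs m n,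
          NM2.eBsB_right (Q) c d AA BB SS rBA rBsB hQ m n]
        simp only [map_sub, map_add, map_smul, smul_eq_mul]
        match m with
        | 0 =>
          simp only [pow_zero, one_mul, mul_one, hhA]
          have hkey := key q hq0 hq1 c d hcd n
          have hw : ((Q)) ^ (2 * n) ≠ 0 := pow_ne_zero _ hQ
          rw [← key q hq0 hq1 c d hcd n, e0, ← pow_mul,
            show ((Q)) ^ (2 + 2 * n) = (Q) ^ 2 * (Q) ^ (2 * n) from pow_add _ 2 (2 * n),
            show ∀ a b x : ℂ, a⁻¹ * (b⁻¹ * (a * b * x)) = a⁻¹ * a * (b⁻¹ * b) * x from by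
              intros; ring,
            inv_mul_cancel₀ hu, inv_mul_cancel₀ hw, one_mul, one_mul]
        | t + 1 =>
          rw [hhBs t n, hhBs t (n + 1), hhBs t (n + 2)]
          ring
  | zero => simp
  | add x y hx hy ihx ihy =>
    rw [mul_add, add_mul, map_add, map_add, ihx, ihy]; ring
  | smul a x hx ihx =>
    rw [mul_smul_comm, smul_mul_assoc, map_smul, map_smul, smul_eq_mul, smul_eq_mul, ihx]
    ring

set_option maxHeartbeats 1000000 in
include hq0 hq1 in
lemma hBs_comm (hcd : c + d ≠ 0)
    (hhB : ∀ m n : ℕ, h (BB ^ (m + 1) * AA ^ n) = 0)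
    (hhBs : ∀ m n : ℕ, h (SS ^ (m + 1) * AA ^ n) = 0)
    (hhA : ∀ n : ℕ, h (AA ^ n) = Hval (Q) c d n) :
    ∀ y, h (SS * y) = (Q) ^ 2 * h (y * SS) := by
  have hQ : (Q) ≠ 0 := hQne q hq0
  intro y
  have hy : y ∈ Submodule.span ℂ (NMset ((q : ℂ)) c d) := by
    rw [span_top hQ]; trivial
  induction hy using Submodule.span_induction with
  | mem x hx =>
    rcases hx with ⟨j, n, rfl⟩ | ⟨j, n, rfl⟩
    · match j with
      | 0 =>
        have hSn : h (SS * AA ^ n) = 0 := by simpa using hhBs 0 n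
        rw [pow_zero, one_mul, NM.c4 (Q) AA SS rABs n, map_smul, smul_eq_mul, hSn]
        ring
      | m + 1 =>
        rw [NM2.eBsB (Q) c d AA BB SS rBA rBsB hQ m n,
          NM2.eBBs_right (Q) c d AA BB SS rABs rBBs m n]
        simp only [map_sub, map_add, map_smul, smul_eq_mul]
        match m with
        | 0 =>
          simp only [pow_zero, one_mul, mul_one, inv_one, hhA]
          rw [show ((Q)) ^ 2 * (((Q) ^ 2) ^ n *
              (c * d * Hval (Q) c d n + (Q) ^ 2 * (c - d) * Hval (Q) c d (n + 1) -
                (Q) ^ 4 * Hval (Q) c d (n + 2))) =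
              ((Q)) ^ (2 + 2 * n) *
              (c * d * Hval (Q) c d n + (Q) ^ 2 * (c - d) * Hval (Q) c d (n + 1) -
                (Q) ^ 4 * Hval (Q) c d (n + 2)) from by
            rw [← mul_assoc, ← pow_mul, ← pow_add],
            key q hq0 hq1 c d hcd n]
        | t + 1 =>
          rw [hhB t n, hhB t (n + 1), hhB t (n + 2)]
          ring
    · rw [← mul_assoc, ← pow_succ', hhBs j n,
        NM2.eBs_right (Q) AA SS rABs (SS ^ j) n, map_smul, smul_eq_mul,
        show SS ^ j * (SS * AA ^ n) = SS ^ (j + 1) * AA ^ n from by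
          rw [← mul_assoc, ← pow_succ],
        hhBs j n]
      ring
  | zero => simp
  | add x y hx hy ihx ihy =>
    rw [mul_add, add_mul, map_add, map_add, ihx, ihy]; ring
  | smul a x hx ihx =>
    rw [mul_smul_comm, smul_mul_assoc, map_smul, map_smul, smul_eq_mul, smul_eq_mul, ihx]
    ring

end Main
end NM

set_option maxHeartbeats 1000000 in
/-- The Noumi–Mimachi functional `h` on `A(c,d)`, defined on the PBW basis by
`h(B^{m+1}Aⁿ) = 0 = h((B*)^{m+1}Aⁿ)` and `h(Aⁿ) = (f(0)/f(n))·(c^{n+1} − (−d)^{n+1})/(c+d)`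
with `f(n) = q⁻² − q^{2n}`, satisfies the modular property `h(xy) = h(y σ_mod(x))`, where
`σ_mod(A) = A`, `σ_mod(B) = q⁻²B`, `σ_mod(B*) = q²B*`. -/
theorem noumi_mimachi_modular (q : ℝ) (hq0 : 0 < q) (hq1 : q < 1) (c d : ℂ)
    (hcd : c + d ≠ 0)
    (h : PodlesAlg ℂ (q : ℂ) c d →ₗ[ℂ] ℂ)
    (σ : PodlesAlg ℂ (q : ℂ) c d ≃ₐ[ℂ] PodlesAlg ℂ (q : ℂ) c d)
    (hσA : σ (pA ℂ (q : ℂ) c d) = pA ℂ (q : ℂ) c d)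
    (hσB : σ (pB ℂ (q : ℂ) c d) = ((q : ℂ) ^ (-2 : ℤ)) • pB ℂ (q : ℂ) c d)
    (hσBs : σ (pBs ℂ (q : ℂ) c d) = ((q : ℂ) ^ 2) • pBs ℂ (q : ℂ) c d)
    (hhB : ∀ m n : ℕ, h ((pB ℂ (q : ℂ) c d) ^ (m + 1) * (pA ℂ (q : ℂ) c d) ^ n) = 0)
    (hhBs : ∀ m n : ℕ, h ((pBs ℂ (q : ℂ) c d) ^ (m + 1) * (pA ℂ (q : ℂ) c d) ^ n) = 0)
    (hhA : ∀ n : ℕ, h ((pA ℂ (q : ℂ) c d) ^ n) =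
      (((q : ℂ) ^ (-2 : ℤ) - 1) / ((q : ℂ) ^ (-2 : ℤ) - (q : ℂ) ^ (2 * n))) *
        ((c ^ (n + 1) - (-d) ^ (n + 1)) / (c + d))) :
    ∀ x y : PodlesAlg ℂ (q : ℂ) c d, h (x * y) = h (y * σ x) := by
  have hA := NM.hA_comm q c d hq0 h hhB hhBs
  have hB := NM.hB_comm q c d hq0 hq1 h hcd hhB hhBs (fun n => by rw [hhA n]; rfl)
  have hBs := NM.hBs_comm q c d hq0 hq1 h hcd hhB hhBs (fun n => by rw [hhA n]; rfl)
  intro x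
  obtain ⟨w, rfl⟩ := RingQuot.mkAlgHom_surjective ℂ (PodlesRel ℂ (q : ℂ) c d) x
  induction w using FreeAlgebra.induction with
  | grade0 r =>
    intro y
    rw [AlgHom.commutes, AlgEquiv.commutes, Algebra.commutes]
  | grade1 i =>
    intro y
    fin_cases i
    · show h (pA ℂ (q : ℂ) c d * y) = h (y * σ (pA ℂ (q : ℂ) c d))
      rw [hσA]; exact hA y
    · show h (pB ℂ (q : ℂ) c d * y) = h (y * σ (pB ℂ (q : ℂ) c d))
      rw [hσB, mul_smul_comm, map_smul, smul_eq_mul]; exact hB y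
    · show h (pBs ℂ (q : ℂ) c d * y) = h (y * σ (pBs ℂ (q : ℂ) c d))
      rw [hσBs, mul_smul_comm, map_smul, smul_eq_mul]; exact hBs y
  | mul a b iha ihb =>
    intro y
    have ema : (RingQuot.mkAlgHom ℂ (PodlesRel ℂ (q : ℂ) c d)) (a * b) =
        (RingQuot.mkAlgHom ℂ (PodlesRel ℂ (q : ℂ) c d)) a *
        (RingQuot.mkAlgHom ℂ (PodlesRel ℂ (q : ℂ) c d)) b := map_mul _ _ _
    rw [ema]
    calc h ((RingQuot.mkAlgHom ℂ (PodlesRel ℂ (q : ℂ) c d)) a *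
          (RingQuot.mkAlgHom ℂ (PodlesRel ℂ (q : ℂ) c d)) b * y)
        = h ((RingQuot.mkAlgHom ℂ (PodlesRel ℂ (q : ℂ) c d)) a *
          ((RingQuot.mkAlgHom ℂ (PodlesRel ℂ (q : ℂ) c d)) b * y)) := by rw [mul_assoc]
      _ = h (((RingQuot.mkAlgHom ℂ (PodlesRel ℂ (q : ℂ) c d)) b * y) *
          σ ((RingQuot.mkAlgHom ℂ (PodlesRel ℂ (q : ℂ) c d)) a)) := iha _
      _ = h ((RingQuot.mkAlgHom ℂ (PodlesRel ℂ (q : ℂ) c d)) b *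
          (y * σ ((RingQuot.mkAlgHom ℂ (PodlesRel ℂ (q : ℂ) c d)) a))) := by rw [mul_assoc]
      _ = h ((y * σ ((RingQuot.mkAlgHom ℂ (PodlesRel ℂ (q : ℂ) c d)) a)) *
          σ ((RingQuot.mkAlgHom ℂ (PodlesRel ℂ (q : ℂ) c d)) b)) := ihb _
      _ = h (y * (σ ((RingQuot.mkAlgHom ℂ (PodlesRel ℂ (q : ℂ) c d)) a) *
          σ ((RingQuot.mkAlgHom ℂ (PodlesRel ℂ (q : ℂ) c d)) b))) := by rw [mul_assoc]
      _ = h (y * σ ((RingQuot.mkAlgHom ℂ (PodlesRel ℂ (q : ℂ) c d)) a *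
          (RingQuot.mkAlgHom ℂ (PodlesRel ℂ (q : ℂ) c d)) b)) := by rw [map_mul σ]
  | add a b iha ihb =>
    intro y
    have ema : (RingQuot.mkAlgHom ℂ (PodlesRel ℂ (q : ℂ) c d)) (a + b) =
        (RingQuot.mkAlgHom ℂ (PodlesRel ℂ (q : ℂ) c d)) a +
        (RingQuot.mkAlgHom ℂ (PodlesRel ℂ (q : ℂ) c d)) b := map_add _ _ _
    rw [ema, add_mul, map_add h, iha y, ihb y, map_add σ, mul_add, map_add h]
end

section
/- In HH_0^σ(A) = A/[A,A]_σ for A = A(c,d) and σ = σ_λ (σ(A)=A, σ(B)=λB, σ(B*)=λ^{-1}B*), the classes x_n := (λ^{-1} − q^{2n})[A^n] satisfy the recurrence x_{n+2} + (d−c)x_{n+1} − cd·x_n = 0 for all n ≥ 0. -/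
/-- In `HH₀^σ(A) = A/[A,A]_σ` for `A = A(c,d)` and `σ = σ_λ`, the classes
`x_n := (λ⁻¹ − q^{2n})[Aⁿ]` satisfy `x_{n+2} + (d−c)x_{n+1} − cd·x_n = 0` for all `n ≥ 0`. -/
theorem podles_HH0_recurrence (k : Type) [Field k] [CharZero k] (q c d : k)
    (hq0 : q ≠ 0) (hq : ∀ n : ℕ, 0 < n → q ^ n ≠ 1) (hcd : c + d ≠ 0)
    (l : k) (hl : l ≠ 0)
    (σ : PodlesAlg k q c d ≃ₐ[k] PodlesAlg k q c d)
    (hσA : σ (pA k q c d) = pA k q c d)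
    (hσB : σ (pB k q c d) = l • pB k q c d)
    (hσBs : σ (pBs k q c d) = l⁻¹ • pBs k q c d)
    (N : Submodule k (PodlesAlg k q c d))
    (hN : N = Submodule.span k {x : PodlesAlg k q c d | ∃ a b, x = a * b - σ b * a}) :
    ∀ n : ℕ,
      (l⁻¹ - q ^ (2 * (n + 2))) • N.mkQ ((pA k q c d) ^ (n + 2)) +
        (d - c) • ((l⁻¹ - q ^ (2 * (n + 1))) • N.mkQ ((pA k q c d) ^ (n + 1))) -
        (c * d) • ((l⁻¹ - q ^ (2 * n)) • N.mkQ ((pA k q c d) ^ n)) = 0 := by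
  intro n
  set A := pA k q c d with hA
  set B := pB k q c d with hB
  set Bs := pBs k q c d with hBs
  have hBA : B * A = q ^ 2 • (A * B) := by
    have := RingQuot.mkAlgHom_rel k (PodlesRel.BA (k := k) (q := q) (c := c) (d := d))
    simpa [hA, hB, pA, pB, map_mul] using this
  have hBsB : Bs * B = algebraMap k (PodlesAlg k q c d) (c * d) + (c - d) • A - A ^ 2 := by
    have := RingQuot.mkAlgHom_rel k (PodlesRel.BsB (k := k) (q := q) (c := c) (d := d))
    simpa [hA, hB, hBs, pA, pB, pBs, map_mul, map_add, map_sub, map_pow] using this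
  have hBBs : B * Bs = algebraMap k (PodlesAlg k q c d) (c * d) +
      (q ^ 2 * (c - d)) • A - q ^ 4 • A ^ 2 := by
    have := RingQuot.mkAlgHom_rel k (PodlesRel.BBs (k := k) (q := q) (c := c) (d := d))
    simpa [hA, hB, hBs, pA, pB, pBs, map_mul, map_add, map_sub, map_pow] using this
  have hBAn : ∀ m : ℕ, B * A ^ m = (q ^ (2 * m)) • (A ^ m * B) := by
    intro m
    induction m with
    | zero => simp
    | succ m ih =>
      rw [pow_succ, ← mul_assoc, ih, smul_mul_assoc, mul_assoc, hBA, mul_smul_comm,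
        smul_smul, ← mul_assoc]
      ring_nf
  have hmem : A ^ n * Bs * B - σ B * (A ^ n * Bs) ∈ N := by
    rw [hN]
    exact Submodule.subset_span ⟨A ^ n * Bs, B, rfl⟩
  have hzero : N.mkQ (A ^ n * Bs * B - σ B * (A ^ n * Bs)) = 0 := by
    rw [Submodule.mkQ_apply, Submodule.Quotient.mk_eq_zero]
    exact hmem
  have hE : A ^ n * Bs * B - σ B * (A ^ n * Bs)
      = ((1 - l * q ^ (2 * n)) * (c * d)) • A ^ n
        + ((1 - l * q ^ (2 * n + 2)) * (c - d)) • A ^ (n + 1)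
        - (1 - l * q ^ (2 * n + 4)) • A ^ (n + 2) := by
    rw [hσB, mul_assoc, hBsB, smul_mul_assoc, ← mul_assoc, hBAn, smul_mul_assoc,
      mul_assoc, hBBs]
    simp only [Algebra.algebraMap_eq_smul_one, mul_add, mul_sub, mul_smul_comm, mul_one,
      smul_smul, pow_succ, pow_zero, one_mul, mul_assoc]
    module
  rw [hE, map_sub, map_add, map_smul, map_smul, map_smul] at hzero
  have hgoal : (l⁻¹ - q ^ (2 * (n + 2))) • N.mkQ (A ^ (n + 2)) +
      (d - c) • ((l⁻¹ - q ^ (2 * (n + 1))) • N.mkQ (A ^ (n + 1))) -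
      (c * d) • ((l⁻¹ - q ^ (2 * n)) • N.mkQ (A ^ n))
      = (-l⁻¹) • (((1 - l * q ^ (2 * n)) * (c * d)) • N.mkQ (A ^ n)
        + ((1 - l * q ^ (2 * n + 2)) * (c - d)) • N.mkQ (A ^ (n + 1))
        - (1 - l * q ^ (2 * n + 4)) • N.mkQ (A ^ (n + 2))) := by
    match_scalars <;> field_simp <;> ring_nf <;> simp
  rw [hgoal, hzero, smul_zero]
end

section
/- For A = A(c,d) and σ = σ_λ with λ ∉ {q^{-2n} : n ∈ ℕ} (and λ ≠ 1), the zeroth twisted Hochschild homology HH_0^σ(A) = A/span{a_1 a_2 − σ(a_2)a_1} is 2-dimensional, spanned by the classes [1] and [A]. -/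
namespace PodlesHH

variable {k : Type} [Field k] {q c d : k}

lemma rBA : pB k q c d * pA k q c d = q ^ 2 • (pA k q c d * pB k q c d) := by
  have h := RingQuot.mkAlgHom_rel k (PodlesRel.BA (k := k) (q := q) (c := c) (d := d))
  simpa [pA, pB, map_mul, map_smul] using h

lemma rABs : pA k q c d * pBs k q c d = q ^ 2 • (pBs k q c d * pA k q c d) := by
  have h := RingQuot.mkAlgHom_rel k (PodlesRel.ABs (k := k) (q := q) (c := c) (d := d))
  simpa [pA, pBs, map_mul, map_smul] using h

lemma rBsB : pBs k q c d * pB k q c d =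
    algebraMap k (PodlesAlg k q c d) (c * d) + (c - d) • pA k q c d - pA k q c d ^ 2 := by
  have h := RingQuot.mkAlgHom_rel k (PodlesRel.BsB (k := k) (q := q) (c := c) (d := d))
  simpa [pA, pB, pBs, map_mul, map_smul, map_add, map_sub, map_pow] using h

lemma rBBs : pB k q c d * pBs k q c d =
    algebraMap k (PodlesAlg k q c d) (c * d) + (q ^ 2 * (c - d)) • pA k q c d -
      q ^ 4 • pA k q c d ^ 2 := by
  have h := RingQuot.mkAlgHom_rel k (PodlesRel.BBs (k := k) (q := q) (c := c) (d := d))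
  simpa [pA, pB, pBs, map_mul, map_smul, map_add, map_sub, map_pow] using h

lemma pB_pApow (m : ℕ) :
    pB k q c d * pA k q c d ^ m = q ^ (2 * m) • (pA k q c d ^ m * pB k q c d) := by
  induction m with
  | zero => simp
  | succ m ih =>
    calc pB k q c d * pA k q c d ^ (m + 1)
        = (pB k q c d * pA k q c d ^ m) * pA k q c d := by rw [pow_succ, mul_assoc]
      _ = q ^ (2 * m) • ((pA k q c d ^ m * pB k q c d) * pA k q c d) := by
          rw [ih, smul_mul_assoc]
      _ = q ^ (2 * m) • (pA k q c d ^ m * (pB k q c d * pA k q c d)) := by rw [mul_assoc]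
      _ = q ^ (2 * m) • (pA k q c d ^ m * (q ^ 2 • (pA k q c d * pB k q c d))) := by rw [rBA]
      _ = (q ^ (2 * m) * q ^ 2) • ((pA k q c d ^ m * pA k q c d) * pB k q c d) := by
          rw [mul_smul_comm, smul_smul, mul_assoc]
      _ = q ^ (2 * (m + 1)) • (pA k q c d ^ (m + 1) * pB k q c d) := by
          rw [← pow_succ, ← pow_add, show 2 * m + 2 = 2 * (m + 1) by ring]

lemma pBpow_pApow (n m : ℕ) :
    pB k q c d ^ n * pA k q c d ^ m = q ^ (2 * (n * m)) • (pA k q c d ^ m * pB k q c d ^ n) := by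
  induction n with
  | zero => simp
  | succ n ih =>
    calc pB k q c d ^ (n + 1) * pA k q c d ^ m
        = pB k q c d * (pB k q c d ^ n * pA k q c d ^ m) := by rw [pow_succ', mul_assoc]
      _ = q ^ (2 * (n * m)) • (pB k q c d * (pA k q c d ^ m * pB k q c d ^ n)) := by
          rw [ih, mul_smul_comm]
      _ = q ^ (2 * (n * m)) • ((pB k q c d * pA k q c d ^ m) * pB k q c d ^ n) := by
          rw [mul_assoc]
      _ = (q ^ (2 * (n * m)) * q ^ (2 * m)) • ((pA k q c d ^ m * pB k q c d) * pB k q c d ^ n) := by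
          rw [pB_pApow, smul_mul_assoc, smul_smul]
      _ = q ^ (2 * ((n + 1) * m)) • (pA k q c d ^ m * pB k q c d ^ (n + 1)) := by
          rw [mul_assoc, ← pow_succ', ← pow_add, show 2 * (n * m) + 2 * m = 2 * ((n + 1) * m) by ring]

lemma pA_pBspow (n : ℕ) :
    pA k q c d * pBs k q c d ^ n = q ^ (2 * n) • (pBs k q c d ^ n * pA k q c d) := by
  induction n with
  | zero => simp
  | succ n ih =>
    calc pA k q c d * pBs k q c d ^ (n + 1)
        = (pA k q c d * pBs k q c d ^ n) * pBs k q c d := by rw [pow_succ, mul_assoc]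
      _ = q ^ (2 * n) • (pBs k q c d ^ n * (pA k q c d * pBs k q c d)) := by
          rw [ih, smul_mul_assoc, mul_assoc]
      _ = (q ^ (2 * n) * q ^ 2) • ((pBs k q c d ^ n * pBs k q c d) * pA k q c d) := by
          rw [rABs, mul_smul_comm, smul_smul, mul_assoc]
      _ = q ^ (2 * (n + 1)) • (pBs k q c d ^ (n + 1) * pA k q c d) := by
          rw [← pow_succ, ← pow_add, show 2 * n + 2 = 2 * (n + 1) by ring]

lemma pApow_pBspow (m n : ℕ) :
    pA k q c d ^ m * pBs k q c d ^ n = q ^ (2 * (m * n)) • (pBs k q c d ^ n * pA k q c d ^ m) := by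
  induction m with
  | zero => simp
  | succ m ih =>
    calc pA k q c d ^ (m + 1) * pBs k q c d ^ n
        = pA k q c d * (pA k q c d ^ m * pBs k q c d ^ n) := by rw [pow_succ', mul_assoc]
      _ = q ^ (2 * (m * n)) • ((pA k q c d * pBs k q c d ^ n) * pA k q c d ^ m) := by
          rw [ih, mul_smul_comm, mul_assoc]
      _ = (q ^ (2 * (m * n)) * q ^ (2 * n)) • (pBs k q c d ^ n * (pA k q c d * pA k q c d ^ m)) := by
          rw [pA_pBspow, smul_mul_assoc, smul_smul, mul_assoc]
      _ = q ^ (2 * ((m + 1) * n)) • (pBs k q c d ^ n * pA k q c d ^ (m + 1)) := by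
          rw [← pow_succ', ← pow_add, show 2 * (m * n) + 2 * n = 2 * ((m + 1) * n) by ring]

/-- The spanning monomials. -/
def Tset (k : Type) [Field k] (q c d : k) : Set (PodlesAlg k q c d) :=
  {z | (∃ m n : ℕ, z = pA k q c d ^ m * pB k q c d ^ n) ∨
    (∃ m n : ℕ, z = pA k q c d ^ m * pBs k q c d ^ n)}

lemma memT_AB (m n : ℕ) : pA k q c d ^ m * pB k q c d ^ n ∈ Tset k q c d :=
  Or.inl ⟨m, n, rfl⟩

lemma memT_ABs (m n : ℕ) : pA k q c d ^ m * pBs k q c d ^ n ∈ Tset k q c d :=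
  Or.inr ⟨m, n, rfl⟩

lemma one_memT : (1 : PodlesAlg k q c d) ∈ Tset k q c d := by
  have := memT_AB (k := k) (q := q) (c := c) (d := d) 0 0
  simpa using this

lemma spanT_mulA (t : ℕ) {x : PodlesAlg k q c d} (hx : x ∈ Submodule.span k (Tset k q c d)) :
    pA k q c d ^ t * x ∈ Submodule.span k (Tset k q c d) := by
  induction hx using Submodule.span_induction with
  | mem y hy =>
    rcases hy with ⟨m, n, rfl⟩ | ⟨m, n, rfl⟩
    · apply Submodule.subset_span
      rw [← mul_assoc, ← pow_add]
      exact memT_AB _ _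
    · apply Submodule.subset_span
      rw [← mul_assoc, ← pow_add]
      exact memT_ABs _ _
  | zero => simp
  | add y z _ _ hy hz => rw [mul_add]; exact Submodule.add_mem _ hy hz
  | smul a y _ hy => rw [mul_smul_comm]; exact Submodule.smul_mem _ _ hy

lemma spanT_algebraMap (r : k) :
    algebraMap k (PodlesAlg k q c d) r ∈ Submodule.span k (Tset k q c d) := by
  have : algebraMap k (PodlesAlg k q c d) r = r • (1 : PodlesAlg k q c d) := by
    rw [Algebra.algebraMap_eq_smul_one]
  rw [this]
  exact Submodule.smul_mem _ _ (Submodule.subset_span one_memT)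

lemma spanT_BBs (n n' : ℕ) :
    pB k q c d ^ n * pBs k q c d ^ n' ∈ Submodule.span k (Tset k q c d) := by
  induction n generalizing n' with
  | zero =>
    simpa using Submodule.subset_span (memT_ABs (k := k) (q := q) (c := c) (d := d) 0 n')
  | succ n ih =>
    cases n' with
    | zero =>
      simpa using Submodule.subset_span (memT_AB (k := k) (q := q) (c := c) (d := d) 0 (n + 1))
    | succ n' =>
      have key : pB k q c d ^ (n + 1) * pBs k q c d ^ (n' + 1)
          = pB k q c d ^ n * ((pB k q c d * pBs k q c d) * pBs k q c d ^ n') := by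
        rw [pow_succ, pow_succ']
        simp only [mul_assoc]
      rw [key, rBBs]
      have expand : (algebraMap k (PodlesAlg k q c d) (c * d) + (q ^ 2 * (c - d)) • pA k q c d -
            q ^ 4 • pA k q c d ^ 2) * pBs k q c d ^ n'
          = algebraMap k (PodlesAlg k q c d) (c * d) * pBs k q c d ^ n'
            + (q ^ 2 * (c - d)) • (pA k q c d * pBs k q c d ^ n')
            - q ^ 4 • (pA k q c d ^ 2 * pBs k q c d ^ n') := by
        rw [sub_mul, add_mul, smul_mul_assoc, smul_mul_assoc]
      rw [expand]
      have hmap : algebraMap k (PodlesAlg k q c d) (c * d) * pBs k q c d ^ n'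
          = (c * d) • pBs k q c d ^ n' := by
        rw [Algebra.algebraMap_eq_smul_one, smul_mul_assoc, one_mul]
      rw [hmap, mul_sub, mul_add, mul_smul_comm, mul_smul_comm, mul_smul_comm]
      apply Submodule.sub_mem
      · apply Submodule.add_mem
        · exact Submodule.smul_mem _ _ (ih n')
        · have h2 : pB k q c d ^ n * (pA k q c d * pBs k q c d ^ n')
              = q ^ (2 * (n * 1)) • (pA k q c d ^ 1 * (pB k q c d ^ n * pBs k q c d ^ n')) := by
            rw [← mul_assoc]
            rw [show pB k q c d ^ n * pA k q c d = pB k q c d ^ n * pA k q c d ^ 1 by rw [pow_one],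
              pBpow_pApow]
            simp only [smul_mul_assoc, mul_assoc]
          rw [h2]
          exact Submodule.smul_mem _ _ (Submodule.smul_mem _ _ (spanT_mulA 1 (ih n')))
      · have h2 : pB k q c d ^ n * (pA k q c d ^ 2 * pBs k q c d ^ n')
            = q ^ (2 * (n * 2)) • (pA k q c d ^ 2 * (pB k q c d ^ n * pBs k q c d ^ n')) := by
          rw [← mul_assoc, pBpow_pApow]
          simp only [smul_mul_assoc, mul_assoc]
        rw [h2]
        exact Submodule.smul_mem _ _ (Submodule.smul_mem _ _ (spanT_mulA 2 (ih n')))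

lemma pBspow_pApow (hq0 : q ≠ 0) (n m : ℕ) :
    pBs k q c d ^ n * pA k q c d ^ m
      = (q ^ (2 * (m * n)))⁻¹ • (pA k q c d ^ m * pBs k q c d ^ n) := by
  rw [eq_inv_smul_iff₀ (pow_ne_zero _ hq0)]
  exact (pApow_pBspow m n).symm

lemma spanT_BsB (hq0 : q ≠ 0) (n n' : ℕ) :
    pBs k q c d ^ n * pB k q c d ^ n' ∈ Submodule.span k (Tset k q c d) := by
  induction n generalizing n' with
  | zero =>
    simpa using Submodule.subset_span (memT_AB (k := k) (q := q) (c := c) (d := d) 0 n')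
  | succ n ih =>
    cases n' with
    | zero =>
      simpa using Submodule.subset_span (memT_ABs (k := k) (q := q) (c := c) (d := d) 0 (n + 1))
    | succ n' =>
      have key : pBs k q c d ^ (n + 1) * pB k q c d ^ (n' + 1)
          = pBs k q c d ^ n * ((pBs k q c d * pB k q c d) * pB k q c d ^ n') := by
        rw [pow_succ, pow_succ']
        rw [mul_assoc, mul_assoc]
      rw [key, rBsB]
      have expand : (algebraMap k (PodlesAlg k q c d) (c * d) + (c - d) • pA k q c d -
            pA k q c d ^ 2) * pB k q c d ^ n'
          = (c * d) • pB k q c d ^ n'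
            + (c - d) • (pA k q c d * pB k q c d ^ n')
            - pA k q c d ^ 2 * pB k q c d ^ n' := by
        rw [sub_mul, add_mul, smul_mul_assoc, Algebra.algebraMap_eq_smul_one, smul_mul_assoc,
          one_mul]
      rw [expand, mul_sub, mul_add, mul_smul_comm, mul_smul_comm]
      apply Submodule.sub_mem
      · apply Submodule.add_mem
        · exact Submodule.smul_mem _ _ (ih n')
        · have h2 : pBs k q c d ^ n * (pA k q c d * pB k q c d ^ n')
              = (q ^ (2 * (1 * n)))⁻¹ •
                (pA k q c d ^ 1 * (pBs k q c d ^ n * pB k q c d ^ n')) := by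
            rw [← mul_assoc, show pBs k q c d ^ n * pA k q c d
                = pBs k q c d ^ n * pA k q c d ^ 1 by rw [pow_one],
              pBspow_pApow hq0, smul_mul_assoc, mul_assoc]
          rw [h2]
          exact Submodule.smul_mem _ _ (Submodule.smul_mem _ _ (spanT_mulA 1 (ih n')))
      · have h2 : pBs k q c d ^ n * (pA k q c d ^ 2 * pB k q c d ^ n')
            = (q ^ (2 * (2 * n)))⁻¹ •
              (pA k q c d ^ 2 * (pBs k q c d ^ n * pB k q c d ^ n')) := by
          rw [← mul_assoc, pBspow_pApow hq0, smul_mul_assoc, mul_assoc]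
        rw [h2]
        exact Submodule.smul_mem _ _ (spanT_mulA 2 (ih n'))

lemma spanT_mul_closed (hq0 : q ≠ 0) {x y : PodlesAlg k q c d}
    (hx : x ∈ Submodule.span k (Tset k q c d)) (hy : y ∈ Submodule.span k (Tset k q c d)) :
    x * y ∈ Submodule.span k (Tset k q c d) := by
  induction hx using Submodule.span_induction with
  | zero => simp
  | add y' z' _ _ h1 h2 => rw [add_mul]; exact Submodule.add_mem _ h1 h2
  | smul a y' _ h1 => rw [smul_mul_assoc]; exact Submodule.smul_mem _ _ h1
  | mem u hu =>
    induction hy using Submodule.span_induction with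
    | zero => simp
    | add y' z' _ _ h1 h2 => rw [mul_add]; exact Submodule.add_mem _ h1 h2
    | smul a y' _ h1 => rw [mul_smul_comm]; exact Submodule.smul_mem _ _ h1
    | mem v hv =>
      rcases hu with ⟨m, n, rfl⟩ | ⟨m, n, rfl⟩ <;> rcases hv with ⟨m', n', rfl⟩ | ⟨m', n', rfl⟩
      · -- (A^m B^n)(A^m' B^n')
        have h : (pA k q c d ^ m * pB k q c d ^ n) * (pA k q c d ^ m' * pB k q c d ^ n')
            = q ^ (2 * (n * m')) •
              (pA k q c d ^ (m + m') * (pB k q c d ^ n * pB k q c d ^ n')) := by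
          calc (pA k q c d ^ m * pB k q c d ^ n) * (pA k q c d ^ m' * pB k q c d ^ n')
              = pA k q c d ^ m * ((pB k q c d ^ n * pA k q c d ^ m') * pB k q c d ^ n') := by
                rw [mul_assoc, mul_assoc]
            _ = q ^ (2 * (n * m')) •
                (pA k q c d ^ m * ((pA k q c d ^ m' * pB k q c d ^ n) * pB k q c d ^ n')) := by
                rw [pBpow_pApow, smul_mul_assoc, mul_smul_comm]
            _ = _ := by rw [pow_add]; simp only [mul_assoc]
        rw [h, ← pow_add]
        have hm : pB k q c d ^ (n + n') ∈ Submodule.span k (Tset k q c d) := by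
          simpa using Submodule.subset_span (memT_AB (k := k) (q := q) (c := c) (d := d) 0 (n + n'))
        exact Submodule.smul_mem _ _ (spanT_mulA _ hm)
      · have h : (pA k q c d ^ m * pB k q c d ^ n) * (pA k q c d ^ m' * pBs k q c d ^ n')
            = q ^ (2 * (n * m')) •
              (pA k q c d ^ (m + m') * (pB k q c d ^ n * pBs k q c d ^ n')) := by
          calc (pA k q c d ^ m * pB k q c d ^ n) * (pA k q c d ^ m' * pBs k q c d ^ n')
              = pA k q c d ^ m * ((pB k q c d ^ n * pA k q c d ^ m') * pBs k q c d ^ n') := by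
                rw [mul_assoc, mul_assoc]
            _ = q ^ (2 * (n * m')) •
                (pA k q c d ^ m * ((pA k q c d ^ m' * pB k q c d ^ n) * pBs k q c d ^ n')) := by
                rw [pBpow_pApow, smul_mul_assoc, mul_smul_comm]
            _ = _ := by rw [pow_add]; simp only [mul_assoc]
        rw [h]
        exact Submodule.smul_mem _ _ (spanT_mulA _ (spanT_BBs _ _))
      · have h : (pA k q c d ^ m * pBs k q c d ^ n) * (pA k q c d ^ m' * pB k q c d ^ n')
            = (q ^ (2 * (m' * n)))⁻¹ •
              (pA k q c d ^ (m + m') * (pBs k q c d ^ n * pB k q c d ^ n')) := by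
          calc (pA k q c d ^ m * pBs k q c d ^ n) * (pA k q c d ^ m' * pB k q c d ^ n')
              = pA k q c d ^ m * ((pBs k q c d ^ n * pA k q c d ^ m') * pB k q c d ^ n') := by
                rw [mul_assoc, mul_assoc]
            _ = (q ^ (2 * (m' * n)))⁻¹ •
                (pA k q c d ^ m * ((pA k q c d ^ m' * pBs k q c d ^ n) * pB k q c d ^ n')) := by
                rw [pBspow_pApow hq0, smul_mul_assoc, mul_smul_comm]
            _ = _ := by rw [pow_add]; simp only [mul_assoc]
        rw [h]
        exact Submodule.smul_mem _ _ (spanT_mulA _ (spanT_BsB hq0 _ _))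
      · have h : (pA k q c d ^ m * pBs k q c d ^ n) * (pA k q c d ^ m' * pBs k q c d ^ n')
            = (q ^ (2 * (m' * n)))⁻¹ •
              (pA k q c d ^ (m + m') * (pBs k q c d ^ n * pBs k q c d ^ n')) := by
          calc (pA k q c d ^ m * pBs k q c d ^ n) * (pA k q c d ^ m' * pBs k q c d ^ n')
              = pA k q c d ^ m * ((pBs k q c d ^ n * pA k q c d ^ m') * pBs k q c d ^ n') := by
                rw [mul_assoc, mul_assoc]
            _ = (q ^ (2 * (m' * n)))⁻¹ •
                (pA k q c d ^ m * ((pA k q c d ^ m' * pBs k q c d ^ n) * pBs k q c d ^ n')) := by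
                rw [pBspow_pApow hq0, smul_mul_assoc, mul_smul_comm]
            _ = _ := by rw [pow_add]; simp only [mul_assoc]
        rw [h, ← pow_add]
        have hm : pBs k q c d ^ (n + n') ∈ Submodule.span k (Tset k q c d) := by
          simpa using Submodule.subset_span (memT_ABs (k := k) (q := q) (c := c) (d := d) 0 (n + n'))
        exact Submodule.smul_mem _ _ (spanT_mulA _ hm)

lemma spanT_top (hq0 : q ≠ 0) : Submodule.span k (Tset k q c d) = ⊤ := by
  rw [Submodule.eq_top_iff']
  intro z
  obtain ⟨y, rfl⟩ := RingQuot.mkAlgHom_surjective k (PodlesRel k q c d) z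
  induction y using FreeAlgebra.induction with
  | grade0 r =>
    have : (RingQuot.mkAlgHom k (PodlesRel k q c d)) (algebraMap k (FreeAlgebra k (Fin 3)) r)
        = algebraMap k (PodlesAlg k q c d) r := by
      simp
    rw [this]; exact spanT_algebraMap r
  | grade1 x =>
    fin_cases x
    · show pA k q c d ∈ Submodule.span k (Tset k q c d)
      simpa using Submodule.subset_span (memT_AB (k := k) (q := q) (c := c) (d := d) 1 0)
    · show pB k q c d ∈ Submodule.span k (Tset k q c d)
      simpa using Submodule.subset_span (memT_AB (k := k) (q := q) (c := c) (d := d) 0 1)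
    · show pBs k q c d ∈ Submodule.span k (Tset k q c d)
      simpa using Submodule.subset_span (memT_ABs (k := k) (q := q) (c := c) (d := d) 0 1)
  | mul a b ha hb =>
    rw [map_mul]
    exact spanT_mul_closed hq0 ha hb
  | add a b ha hb =>
    rw [map_add]
    exact Submodule.add_mem _ ha hb

/-! ### The lowest weight representation on `ℕ →₀ k` -/

noncomputable def opOf {k : Type} [Field k] (F : ℕ → (ℕ →₀ k)) : Module.End k (ℕ →₀ k) :=
  Finsupp.lsum k fun n => LinearMap.smulRight (LinearMap.id : k →ₗ[k] k) (F n)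

lemma opOf_single {k : Type} [Field k] (F : ℕ → (ℕ →₀ k)) (n : ℕ) (a : k) :
    opOf F (Finsupp.single n a) = a • F n := by
  simp [opOf]

def rrv (q c d e : k) (j : ℕ) : k :=
  c * d + (c - d) * (e * q ^ (2 * j)) - (e * q ^ (2 * j)) ^ 2

lemma rrv_zero {q c d e : k} [Field k] (he : c * d + (c - d) * e - e ^ 2 = 0) :
    rrv q c d e 0 = 0 := by
  simp only [rrv, Nat.mul_zero, pow_zero, mul_one]
  exact he

noncomputable def opA (q e : k) : Module.End k (ℕ →₀ k) :=
  opOf fun n => (e * q ^ (2 * n)) • Finsupp.single n 1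

noncomputable def opB (q c d e : k) : Module.End k (ℕ →₀ k) :=
  opOf fun n => rrv q c d e n • Finsupp.single (n - 1) 1

noncomputable def opBs (k : Type) [Field k] : Module.End k (ℕ →₀ k) :=
  opOf fun n => Finsupp.single (n + 1) 1

variable {e : k}

lemma opA_single (j : ℕ) (b : k) :
    opA q e (Finsupp.single j b) = (b * (e * q ^ (2 * j))) • Finsupp.single j 1 := by
  rw [opA, opOf_single, smul_smul]

lemma opB_single (j : ℕ) (b : k) :
    opB q c d e (Finsupp.single j b) = (b * rrv q c d e j) • Finsupp.single (j - 1) 1 := by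
  rw [opB, opOf_single, smul_smul]

lemma opBs_single (j : ℕ) (b : k) :
    opBs k (Finsupp.single j b) = b • Finsupp.single (j + 1) 1 := by
  rw [opBs, opOf_single]

noncomputable def repFree (q c d e : k) : FreeAlgebra k (Fin 3) →ₐ[k] Module.End k (ℕ →₀ k) :=
  FreeAlgebra.lift k ![opA q e, opB q c d e, opBs k]

lemma matv0 : (![opA q e, opB q c d e, opBs k] : Fin 3 → Module.End k (ℕ →₀ k)) 0 = opA q e := rfl
lemma matv1 : (![opA q e, opB q c d e, opBs k] : Fin 3 → Module.End k (ℕ →₀ k)) 1 = opB q c d e := rfl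
lemma matv2 : (![opA q e, opB q c d e, opBs k] : Fin 3 → Module.End k (ℕ →₀ k)) 2 = opBs k := rfl

lemma repFree_rel (he : c * d + (c - d) * e - e ^ 2 = 0) :
    ∀ ⦃x y : FreeAlgebra k (Fin 3)⦄, PodlesRel k q c d x y →
      repFree q c d e x = repFree q c d e y := by
  rintro x y ⟨⟩
  · -- BA
    simp only [map_mul, map_smul, repFree, FreeAlgebra.lift_ι_apply, matv0, matv1, matv2]
    apply Finsupp.lhom_ext
    intro j b
    simp only [Module.End.mul_apply, LinearMap.smul_apply, opA_single, opB_single, map_smul,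
      smul_smul]
    cases j with
    | zero => simp [rrv_zero he]
    | succ j =>
      simp only [Nat.add_sub_cancel]
      congr 1
      rw [show 2 * (j + 1) = 2 * j + 2 by ring, pow_add]
      ring
  · -- ABs
    simp only [map_mul, map_smul, repFree, FreeAlgebra.lift_ι_apply, matv0, matv1, matv2]
    apply Finsupp.lhom_ext
    intro j b
    simp only [Module.End.mul_apply, LinearMap.smul_apply, opA_single, opBs_single, map_smul,
      smul_smul]
    congr 1
    rw [show 2 * (j + 1) = 2 * j + 2 by ring, pow_add]
    ring
  · -- BsB
    simp only [map_mul, map_smul, map_add, map_sub, map_pow, repFree, FreeAlgebra.lift_ι_apply,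
      AlgHom.commutes, matv0, matv1, matv2]
    apply Finsupp.lhom_ext
    intro j b
    simp only [Module.End.mul_apply, LinearMap.add_apply, LinearMap.sub_apply,
      LinearMap.smul_apply, Module.algebraMap_end_apply, pow_two, opB_single, opBs_single,
      opA_single, map_smul, smul_smul, Finsupp.smul_single, smul_eq_mul]
    rw [← Finsupp.single_add, ← Finsupp.single_sub]
    cases j with
    | zero =>
      rw [rrv_zero he]
      have hc : c * (d * b) + (c - d) * (b * (e * q ^ (2 * 0)) * 1)
          - b * (e * q ^ (2 * 0)) * 1 * (e * q ^ (2 * 0)) * 1 = 0 := by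
        simp only [Nat.mul_zero, pow_zero, mul_one]
        linear_combination b * he
      rw [hc]
      simp
    | succ j =>
      simp only [Nat.add_sub_cancel]
      congr 1
      simp only [rrv, show 2 * (j + 1) = 2 * j + 2 by ring, pow_add]
      ring
  · -- BBs
    simp only [map_mul, map_smul, map_add, map_sub, map_pow, repFree, FreeAlgebra.lift_ι_apply,
      AlgHom.commutes, matv0, matv1, matv2]
    apply Finsupp.lhom_ext
    intro j b
    simp only [Module.End.mul_apply, LinearMap.add_apply, LinearMap.sub_apply,
      LinearMap.smul_apply, Module.algebraMap_end_apply, pow_two, opB_single, opBs_single,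
      opA_single, map_smul, smul_smul, Finsupp.smul_single, smul_eq_mul]
    rw [← Finsupp.single_add, ← Finsupp.single_sub]
    simp only [Nat.add_sub_cancel]
    congr 1
    simp only [rrv, show 2 * (j + 1) = 2 * j + 2 by ring, pow_add]
    ring

noncomputable def rep (q c d e : k) (he : c * d + (c - d) * e - e ^ 2 = 0) :
    PodlesAlg k q c d →ₐ[k] Module.End k (ℕ →₀ k) :=
  RingQuot.liftAlgHom k ⟨repFree q c d e, repFree_rel he⟩

lemma rep_pA (he : c * d + (c - d) * e - e ^ 2 = 0) : rep q c d e he (pA k q c d) = opA q e := by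
  rw [rep, pA, RingQuot.liftAlgHom_mkAlgHom_apply, repFree, FreeAlgebra.lift_ι_apply, matv0]

lemma rep_pB (he : c * d + (c - d) * e - e ^ 2 = 0) :
    rep q c d e he (pB k q c d) = opB q c d e := by
  rw [rep, pB, RingQuot.liftAlgHom_mkAlgHom_apply, repFree, FreeAlgebra.lift_ι_apply, matv1]

lemma rep_pBs (he : c * d + (c - d) * e - e ^ 2 = 0) : rep q c d e he (pBs k q c d) = opBs k := by
  rw [rep, pBs, RingQuot.liftAlgHom_mkAlgHom_apply, repFree, FreeAlgebra.lift_ι_apply, matv2]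

/-- iterated coefficients of `opB` -/
noncomputable def Rpr (q c d e : k) : ℕ → ℕ → k
  | _, 0 => 1
  | j, n + 1 => rrv q c d e j * Rpr q c d e (j - 1) n

lemma Rpr_zero_of_lt (he : c * d + (c - d) * e - e ^ 2 = 0) :
    ∀ n j : ℕ, j < n → Rpr q c d e j n = 0 := by
  intro n
  induction n with
  | zero => intro j h; omega
  | succ n ih =>
    intro j h
    cases j with
    | zero => rw [Rpr, rrv_zero he, zero_mul]
    | succ j =>
      rw [Rpr, Nat.add_sub_cancel, ih j (by omega), mul_zero]

lemma opA_pow_single (m j : ℕ) :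
    (opA q e ^ m) (Finsupp.single j 1) = (e * q ^ (2 * j)) ^ m • Finsupp.single j 1 := by
  induction m with
  | zero => simp
  | succ m ih =>
    rw [pow_succ', Module.End.mul_apply, ih, map_smul, opA_single, one_mul, smul_smul, ← pow_succ]

lemma opBs_pow_single (n j : ℕ) :
    (opBs k ^ n) (Finsupp.single j 1) = Finsupp.single (j + n) (1 : k) := by
  induction n generalizing j with
  | zero => simp
  | succ n ih =>
    rw [pow_succ, Module.End.mul_apply, opBs_single, one_smul, ih]
    congr 1
    omega

lemma opB_pow_single (n j : ℕ) :
    (opB q c d e ^ n) (Finsupp.single j 1) = Rpr q c d e j n • Finsupp.single (j - n) 1 := by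
  induction n generalizing j with
  | zero => simp [Rpr]
  | succ n ih =>
    rw [pow_succ, Module.End.mul_apply, opB_single, one_mul, map_smul, ih, smul_smul, Nat.sub_sub]
    rw [show Rpr q c d e j (n + 1) = rrv q c d e j * Rpr q c d e (j - 1) n from rfl,
      show 1 + n = n + 1 from by omega]

/-! ### The `q`-integral functional -/

open Polynomial in
noncomputable def Lam (q l : k) : Polynomial k →ₗ[k] k where
  toFun p := p.sum fun m a => a * (1 - l * q ^ (2 * m))⁻¹
  map_add' p p' := Polynomial.sum_add_index p p' _ (fun _ => zero_mul _)
    (fun _ b1 b2 => add_mul b1 b2 _)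
  map_smul' r p := by
    rw [Polynomial.sum_smul_index p r (fun m a => a * (1 - l * q ^ (2 * m))⁻¹) (fun _ => zero_mul _)]
    simp only [Polynomial.sum_def, smul_eq_mul, Finset.mul_sum, mul_assoc, RingHom.id_apply]

lemma Lam_monomial (q l : k) (m : ℕ) (a : k) :
    Lam q l (Polynomial.monomial m a) = a * (1 - l * q ^ (2 * m))⁻¹ := by
  rw [show Lam q l (Polynomial.monomial m a)
      = (Polynomial.monomial m a).sum (fun m' a' => a' * (1 - l * q ^ (2 * m'))⁻¹) from rfl,
    Polynomial.sum_monomial_index a (fun m' a' => a' * (1 - l * q ^ (2 * m'))⁻¹) (zero_mul _)]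

noncomputable def rpoly (c d y : k) : Polynomial k :=
  Polynomial.monomial 0 (c * d) + Polynomial.monomial 1 ((c - d) * y)
    - Polynomial.monomial 2 (y ^ 2)

lemma rpoly_eval (c d y x : k) :
    (rpoly c d y).eval x = c * d + (c - d) * (y * x) - (y * x) ^ 2 := by
  simp [rpoly]
  ring

noncomputable def scp (t : k) : Polynomial k →ₐ[k] Polynomial k :=
  Polynomial.aeval (Polynomial.C t * Polynomial.X)

lemma scp_monomial (t : k) (m : ℕ) (a : k) :
    scp t (Polynomial.monomial m a) = Polynomial.monomial m (a * t ^ m) := by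
  simp only [scp]
  rw [← Polynomial.C_mul_X_pow_eq_monomial, ← Polynomial.C_mul_X_pow_eq_monomial, map_mul,
    map_pow, Polynomial.aeval_C, Polynomial.aeval_X, mul_pow, ← Polynomial.C_pow,
    Polynomial.C_mul, Polynomial.algebraMap_eq]
  ring

lemma scp_rpoly (t c d y : k) : scp t (rpoly c d y) = rpoly c d (y * t) := by
  simp only [rpoly, map_add, map_sub, scp_monomial]
  congr 2
  · simp
  · rw [pow_one]; ring_nf
  · rw [mul_pow]

lemma scp_eval (t x : k) (f : Polynomial k) : (scp t f).eval x = f.eval (t * x) := by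
  have hc : scp t f = f.comp (Polynomial.C t * Polynomial.X) := by
    rw [scp, Polynomial.comp_eq_aeval]
  rw [hc, Polynomial.eval_comp]
  simp

lemma scp_scp (t1 t2 : k) (f : Polynomial k) : scp t1 (scp t2 f) = scp (t2 * t1) f := by
  have h : (scp t1).comp (scp t2) = scp (t2 * t1) := by
    apply Polynomial.algHom_ext
    simp only [AlgHom.coe_comp, Function.comp_apply, scp, Polynomial.aeval_X]
    rw [map_mul, Polynomial.aeval_C, Polynomial.aeval_X, Polynomial.C_mul,
      Polynomial.algebraMap_eq]
    ring
  calc scp t1 (scp t2 f) = ((scp t1).comp (scp t2)) f := rfl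
    _ = scp (t2 * t1) f := by rw [h]

lemma scp_one (f : Polynomial k) : scp (1 : k) f = f := by
  have h : scp (1 : k) = AlgHom.id k (Polynomial k) := by
    apply Polynomial.algHom_ext
    simp [scp]
  rw [h]; rfl

section KeyIdentity

variable (l : k)

lemma wgt_ne (hq0 : q ≠ 0) (hl : ∀ n : ℕ, l ≠ (q ^ (2 * n))⁻¹) (t : ℕ) :
    1 - l * q ^ (2 * t) ≠ 0 := by
  intro h
  have h2 : l * q ^ (2 * t) = 1 := by linear_combination -h
  exact hl t (eq_inv_of_mul_eq_one_left h2)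

lemma KEY (he : c * d + (c - d) * e - e ^ 2 = 0) (hl0 : l ≠ 0) (u : k) (hu : u ≠ 0)
    (h1 : 1 - l * u ≠ 0) (h2 : 1 - l * u * q ^ 2 ≠ 0) (h3 : 1 - l * u * q ^ 4 ≠ 0) :
    c * d * (1 - l * u)⁻¹ + (c - d) * (e * q ^ 2) * (1 - l * u * q ^ 2)⁻¹
      - (e * q ^ 2) ^ 2 * (1 - l * u * q ^ 4)⁻¹
    = l⁻¹ * u⁻¹ * (c * d * (1 - l * u)⁻¹ + (c - d) * e * (1 - l * u * q ^ 2)⁻¹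
        - e ^ 2 * (1 - l * u * q ^ 4)⁻¹) := by
  have hcd : c * d = e ^ 2 - (c - d) * e := by linear_combination he
  rw [hcd]
  field_simp
  ring

end KeyIdentity

section MainIdentity

variable (l : k)

lemma L1 (he : c * d + (c - d) * e - e ^ 2 = 0) (hq0 : q ≠ 0) (hl0 : l ≠ 0)
    (hl : ∀ n : ℕ, l ≠ (q ^ (2 * n))⁻¹) (f : Polynomial k) :
    Lam q l (f * rpoly c d (e * q ^ 2))
      = l⁻¹ * Lam q l (scp ((q⁻¹) ^ 2) f * rpoly c d e) := by
  induction f using Polynomial.induction_on' with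
  | add p p' hp hp' =>
    rw [add_mul, map_add, map_add, add_mul, map_add, hp, hp', mul_add]
  | monomial m a =>
    have hmul : ∀ b y : k, Polynomial.monomial m b * rpoly c d y
        = Polynomial.monomial m (b * (c * d)) + Polynomial.monomial (m + 1) (b * ((c - d) * y))
          - Polynomial.monomial (m + 2) (b * y ^ 2) := by
      intro b y
      simp only [rpoly, mul_add, mul_sub, Polynomial.monomial_mul_monomial, add_zero]
    have e1 : q ^ (2 * (m + 1)) = q ^ (2 * m) * q ^ 2 := by
      rw [show 2 * (m + 1) = 2 * m + 2 by ring, pow_add]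
    have e2 : q ^ (2 * (m + 2)) = q ^ (2 * m) * q ^ 4 := by
      rw [show 2 * (m + 2) = 2 * m + 4 by ring, pow_add]
    have e3 : (((q⁻¹) ^ 2) ^ m) = (q ^ (2 * m))⁻¹ := by
      rw [← pow_mul, ← inv_pow]
    have h2 : 1 - l * q ^ (2 * m) * q ^ 2 ≠ 0 := by
      have h := wgt_ne l hq0 hl (m + 1)
      rw [e1, ← mul_assoc] at h
      exact h
    have h3 : 1 - l * q ^ (2 * m) * q ^ 4 ≠ 0 := by
      have h := wgt_ne l hq0 hl (m + 2)
      rw [e2, ← mul_assoc] at h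
      exact h
    have hkey := KEY l he hl0 (q ^ (2 * m)) (pow_ne_zero _ hq0) (wgt_ne l hq0 hl m) h2 h3
    rw [hmul a (e * q ^ 2), scp_monomial, hmul (a * ((q⁻¹) ^ 2) ^ m) e]
    simp only [map_add, map_sub, Lam_monomial]
    rw [e1, e2, e3]
    rw [show (1 - l * (q ^ (2 * m) * q ^ 2)) = (1 - l * q ^ (2 * m) * q ^ 2) by ring,
      show (1 - l * (q ^ (2 * m) * q ^ 4)) = (1 - l * q ^ (2 * m) * q ^ 4) by ring]
    linear_combination a * hkey

noncomputable def gP (q c d e : k) (n : ℕ) : Polynomial k :=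
  ∏ i ∈ Finset.range n, rpoly c d (e * q ^ (2 * (i + 1)))

noncomputable def hPp (q c d e : k) (n : ℕ) : Polynomial k :=
  ∏ i ∈ Finset.range n, rpoly c d (e * (q⁻¹) ^ (2 * i))

lemma gP_succ (n : ℕ) :
    gP q c d e (n + 1) = rpoly c d (e * q ^ 2) * scp (q ^ 2) (gP q c d e n) := by
  rw [gP, Finset.prod_range_succ', gP, map_prod]
  rw [mul_comm]
  have h0 : rpoly c d (e * q ^ (2 * (0 + 1))) = rpoly c d (e * q ^ 2) := by norm_num
  rw [h0]
  congr 1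
  apply Finset.prod_congr rfl
  intro i _
  rw [scp_rpoly]
  congr 1
  rw [show 2 * (i + 1 + 1) = 2 * (i + 1) + 2 by ring, pow_add]
  ring

lemma hP_succ (n : ℕ) :
    hPp q c d e (n + 1) = hPp q c d e n * rpoly c d (e * (q⁻¹) ^ (2 * n)) := by
  rw [hPp, Finset.prod_range_succ, hPp]

lemma hP_succ' (n : ℕ) :
    hPp q c d e (n + 1) = scp ((q⁻¹) ^ 2) (hPp q c d e n) * rpoly c d e := by
  rw [hPp, Finset.prod_range_succ', hPp, map_prod]
  have h0 : rpoly c d (e * (q⁻¹) ^ (2 * 0)) = rpoly c d e := by norm_num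
  rw [h0]
  congr 1
  apply Finset.prod_congr rfl
  intro i _
  rw [scp_rpoly]
  congr 1
  rw [show 2 * (i + 1) = 2 * i + 2 by ring, pow_add]
  ring

lemma L2 (he : c * d + (c - d) * e - e ^ 2 = 0) (hq0 : q ≠ 0) (hl0 : l ≠ 0)
    (hl : ∀ n : ℕ, l ≠ (q ^ (2 * n))⁻¹) :
    ∀ (n : ℕ) (f : Polynomial k),
      Lam q l (f * gP q c d e n)
        = (l⁻¹) ^ n * Lam q l (scp ((q⁻¹) ^ (2 * n)) f * hPp q c d e n) := by
  intro n
  induction n with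
  | zero =>
    intro f
    simp [gP, hPp, scp_one]
  | succ n ih =>
    intro f
    have hq2 : q ^ 2 * (q⁻¹) ^ 2 = 1 := by field_simp
    calc Lam q l (f * gP q c d e (n + 1))
        = Lam q l ((f * scp (q ^ 2) (gP q c d e n)) * rpoly c d (e * q ^ 2)) := by
          rw [gP_succ]; congr 1; ring
      _ = l⁻¹ * Lam q l (scp ((q⁻¹) ^ 2) (f * scp (q ^ 2) (gP q c d e n)) * rpoly c d e) :=
          L1 l he hq0 hl0 hl _
      _ = l⁻¹ * Lam q l ((scp ((q⁻¹) ^ 2) f * rpoly c d e) * gP q c d e n) := by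
          rw [map_mul (scp ((q⁻¹) ^ 2)), scp_scp, hq2, scp_one]
          congr 2
          ring
      _ = l⁻¹ * ((l⁻¹) ^ n *
            Lam q l (scp ((q⁻¹) ^ (2 * n)) (scp ((q⁻¹) ^ 2) f * rpoly c d e) * hPp q c d e n)) := by
          rw [ih]
      _ = (l⁻¹) ^ (n + 1) *
            Lam q l (scp ((q⁻¹) ^ (2 * (n + 1))) f * hPp q c d e (n + 1)) := by
          rw [map_mul (scp ((q⁻¹) ^ (2 * n))), scp_scp, scp_rpoly, hP_succ, ← mul_assoc,
            ← pow_succ']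
          congr 2
          rw [show ((q⁻¹) ^ 2 * (q⁻¹) ^ (2 * n)) = (q⁻¹) ^ (2 * (n + 1)) by
            rw [← pow_add]; congr 1; ring]
          ring

lemma evH (he : c * d + (c - d) * e - e ^ 2 = 0) (hq0 : q ≠ 0) :
    ∀ (n j : ℕ), (hPp q c d e n).eval (q ^ (2 * j)) = Rpr q c d e j n := by
  intro n
  induction n with
  | zero => intro j; simp [hPp, Rpr]
  | succ n ih =>
    intro j
    rw [hP_succ', Polynomial.eval_mul, scp_eval, rpoly_eval]
    cases j with
    | zero =>
      rw [show Rpr q c d e 0 (n + 1) = rrv q c d e 0 * Rpr q c d e (0 - 1) n from rfl,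
        rrv_zero he, zero_mul]
      have : c * d + (c - d) * (e * q ^ (2 * 0)) - (e * q ^ (2 * 0)) ^ 2 = 0 := by
        simpa [rrv] using rrv_zero (q := q) he
      rw [this, mul_zero]
    | succ j =>
      have hx : (q⁻¹) ^ 2 * q ^ (2 * (j + 1)) = q ^ (2 * j) := by
        rw [show 2 * (j + 1) = 2 * j + 2 by ring, pow_add]
        field_simp
      rw [hx, ih j]
      rw [show Rpr q c d e (j + 1) (n + 1)
          = rrv q c d e (j + 1) * Rpr q c d e (j + 1 - 1) n from rfl, Nat.add_sub_cancel]
      rw [rrv]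
      ring

lemma evG (hq0 : q ≠ 0) :
    ∀ (n j : ℕ), (gP q c d e n).eval (q ^ (2 * j)) = Rpr q c d e (j + n) n := by
  intro n
  induction n with
  | zero => intro j; simp [gP, Rpr]
  | succ n ih =>
    intro j
    rw [gP, Finset.prod_range_succ, ← gP, Polynomial.eval_mul, ih j, rpoly_eval]
    rw [show Rpr q c d e (j + (n + 1)) (n + 1)
        = rrv q c d e (j + (n + 1)) * Rpr q c d e (j + (n + 1) - 1) n from rfl]
    rw [show (j + (n + 1) - 1) = j + n by omega]
    rw [rrv, show (j + (n + 1)) = j + n + 1 by omega]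
    rw [show e * q ^ (2 * (n + 1)) * q ^ (2 * j) = e * q ^ (2 * (j + n + 1)) by
      rw [show 2 * (j + n + 1) = 2 * (n + 1) + 2 * j by ring, pow_add]; ring]
    ring

end MainIdentity

/-! ### Diagonal matrix coefficients -/

noncomputable def dg : Module.End k (ℕ →₀ k) →ₗ[k] (ℕ → k) where
  toFun T := fun j => T (Finsupp.single j 1) j
  map_add' T S := by funext j; simp
  map_smul' r T := by funext j; simp

lemma dg_apply (T : Module.End k (ℕ →₀ k)) (j : ℕ) :
    dg T j = T (Finsupp.single j 1) j := rfl

noncomputable def evp (q : k) : Polynomial k →ₗ[k] (ℕ → k) :=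
  LinearMap.pi fun j => Polynomial.leval (q ^ (2 * j))

lemma evp_apply (p : Polynomial k) (j : ℕ) : evp q p j = p.eval (q ^ (2 * j)) := rfl

lemma qpow_injective (hq0 : q ≠ 0) (hq : ∀ n : ℕ, 0 < n → q ^ n ≠ 1) :
    Function.Injective (fun j : ℕ => q ^ (2 * j)) := by
  have key : ∀ i j : ℕ, i < j → q ^ (2 * i) ≠ q ^ (2 * j) := by
    intro i j hij h
    have h2 : q ^ (2 * j) = q ^ (2 * i) * q ^ (2 * (j - i)) := by
      rw [← pow_add]
      congr 1
      omega
    rw [h2] at h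
    have h3 : q ^ (2 * (j - i)) = 1 := by
      have hne : q ^ (2 * i) ≠ 0 := pow_ne_zero _ hq0
      field_simp at h
      exact h.symm
    exact hq (2 * (j - i)) (by omega) h3
  intro i j h
  rcases lt_trichotomy i j with hlt | heq | hgt
  · exact absurd h (key i j hlt)
  · exact heq
  · exact absurd h.symm (key j i hgt)

lemma evp_injective (hq0 : q ≠ 0) (hq : ∀ n : ℕ, 0 < n → q ^ n ≠ 1) :
    LinearMap.ker (evp (k := k) q) = ⊥ := by
  rw [LinearMap.ker_eq_bot']
  intro p hp
  apply Polynomial.eq_zero_of_infinite_isRoot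
  apply Set.infinite_of_injective_forall_mem (f := fun j : ℕ => q ^ (2 * j))
    (qpow_injective hq0 hq)
  intro j
  show p.IsRoot (q ^ (2 * j))
  have := congrFun hp j
  simpa [evp_apply] using this

section DiagLemmas

variable {l : k}

lemma apply_BB (m n m' n' j : ℕ) :
    (opA q e ^ m * opB q c d e ^ n * (opA q e ^ m' * opB q c d e ^ n'))
        (Finsupp.single j 1)
      = (Rpr q c d e j n' * (e * q ^ (2 * (j - n'))) ^ m' * Rpr q c d e (j - n') n
          * (e * q ^ (2 * (j - n' - n))) ^ m) • Finsupp.single (j - n' - n) 1 := by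
  simp only [Module.End.mul_apply, opB_pow_single, map_smul, opA_pow_single, smul_smul]
  congr 1
  ring

lemma apply_BsBs (m n m' n' j : ℕ) :
    (opA q e ^ m * opBs k ^ n * (opA q e ^ m' * opBs k ^ n')) (Finsupp.single j 1)
      = ((e * q ^ (2 * (j + n'))) ^ m' * (e * q ^ (2 * (j + n' + n))) ^ m) •
          Finsupp.single (j + n' + n) 1 := by
  simp only [Module.End.mul_apply, opBs_pow_single, map_smul, opA_pow_single, smul_smul]

lemma apply_BBs (m n m' n' j : ℕ) :
    (opA q e ^ m * opB q c d e ^ n * (opA q e ^ m' * opBs k ^ n')) (Finsupp.single j 1)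
      = ((e * q ^ (2 * (j + n'))) ^ m' * Rpr q c d e (j + n') n
          * (e * q ^ (2 * (j + n' - n))) ^ m) • Finsupp.single (j + n' - n) 1 := by
  simp only [Module.End.mul_apply, opBs_pow_single, opB_pow_single, map_smul, opA_pow_single,
    smul_smul]
  congr 1
  ring

lemma apply_BsB (m n m' n' j : ℕ) :
    (opA q e ^ m * opBs k ^ n * (opA q e ^ m' * opB q c d e ^ n')) (Finsupp.single j 1)
      = (Rpr q c d e j n' * (e * q ^ (2 * (j - n'))) ^ m'
          * (e * q ^ (2 * (j - n' + n))) ^ m) • Finsupp.single (j - n' + n) 1 := by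
  simp only [Module.End.mul_apply, opB_pow_single, opBs_pow_single, map_smul, opA_pow_single,
    smul_smul]

variable (he : c * d + (c - d) * e - e ^ 2 = 0) (hq0 : q ≠ 0)
include he

lemma dg_BB (m n m' n' : ℕ) (h : 0 < n + n') :
    dg (opA q e ^ m * opB q c d e ^ n * (opA q e ^ m' * opB q c d e ^ n')) = 0 := by
  funext j
  rw [Pi.zero_apply, dg_apply, apply_BB, Finsupp.smul_apply, Finsupp.single_apply]
  by_cases h1 : j < n'
  · simp [Rpr_zero_of_lt he _ _ h1]
  · by_cases h2 : j - n' < n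
    · simp [Rpr_zero_of_lt he _ _ h2]
    · rw [if_neg (by omega)]
      simp

omit he in
lemma dg_BsBs (m n m' n' : ℕ) (h : 0 < n + n') :
    dg (opA q e ^ m * opBs k ^ n * (opA q e ^ m' * opBs k ^ n')) = 0 := by
  funext j
  rw [Pi.zero_apply, dg_apply, apply_BsBs, Finsupp.smul_apply, Finsupp.single_apply]
  rw [if_neg (by omega)]
  simp

lemma dg_BBs_ne (m n m' n' : ℕ) (h : n ≠ n') :
    dg (opA q e ^ m * opB q c d e ^ n * (opA q e ^ m' * opBs k ^ n')) = 0 := by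
  funext j
  rw [Pi.zero_apply, dg_apply, apply_BBs, Finsupp.smul_apply, Finsupp.single_apply]
  by_cases h1 : j + n' < n
  · simp [Rpr_zero_of_lt he _ _ h1]
  · rw [if_neg (by omega)]
    simp

lemma dg_BsB_ne (m n m' n' : ℕ) (h : n ≠ n') :
    dg (opA q e ^ m * opBs k ^ n * (opA q e ^ m' * opB q c d e ^ n')) = 0 := by
  funext j
  rw [Pi.zero_apply, dg_apply, apply_BsB, Finsupp.smul_apply, Finsupp.single_apply]
  by_cases h1 : j < n'
  · simp [Rpr_zero_of_lt he _ _ h1]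
  · rw [if_neg (by omega)]
    simp

omit he in
include hq0 in
lemma dg_BBs_eq (m n m' : ℕ) :
    dg (opA q e ^ m * opB q c d e ^ n * (opA q e ^ m' * opBs k ^ n))
      = evp q (Polynomial.C (e ^ (m + m') * q ^ (2 * (n * m'))) * Polynomial.X ^ (m + m')
          * gP q c d e n) := by
  funext j
  rw [dg_apply, apply_BBs, Finsupp.smul_apply, Finsupp.single_apply,
    if_pos (by omega : j + n - n = j), evp_apply, Polynomial.eval_mul, Polynomial.eval_mul,
    Polynomial.eval_C, Polynomial.eval_pow, Polynomial.eval_X, evG hq0 n j]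
  rw [show j + n - n = j by omega]
  rw [smul_eq_mul, mul_one]
  ring

include hq0 in
lemma dg_BsB_eq (m n m' : ℕ) :
    q ^ (2 * (n * m)) • dg (opA q e ^ m' * opBs k ^ n * (opA q e ^ m * opB q c d e ^ n))
      = evp q (Polynomial.C (e ^ (m + m')) * Polynomial.X ^ (m + m') * hPp q c d e n) := by
  funext j
  rw [Pi.smul_apply, dg_apply, apply_BsB, Finsupp.smul_apply, Finsupp.single_apply, evp_apply,
    Polynomial.eval_mul, Polynomial.eval_mul, Polynomial.eval_C, Polynomial.eval_pow,
    Polynomial.eval_X, evH he hq0 n j]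
  by_cases h1 : j < n
  · simp [Rpr_zero_of_lt he _ _ h1]
  · obtain ⟨i, rfl⟩ : ∃ i, j = i + n := ⟨j - n, by omega⟩
    rw [if_pos (by omega : i + n - n + n = i + n), show i + n - n = i by omega]
    rw [smul_eq_mul, smul_eq_mul, mul_one]
    ring

end DiagLemmas

lemma Lam_C_mul (l a : k) (p : Polynomial k) :
    Lam q l (Polynomial.C a * p) = a * Lam q l p := by
  rw [← Polynomial.smul_eq_C_mul, map_smul, smul_eq_mul]

lemma Phi_comm_vanish (l : k)
    (he : c * d + (c - d) * e - e ^ 2 = 0) (hq0 : q ≠ 0) (hl0 : l ≠ 0)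
    (hl : ∀ n : ℕ, l ≠ (q ^ (2 * n))⁻¹)
    (π : (ℕ → k) →ₗ[k] Polynomial k) (hπ : ∀ p, π (evp q p) = p)
    (σ : PodlesAlg k q c d ≃ₐ[k] PodlesAlg k q c d)
    (hσA : σ (pA k q c d) = pA k q c d)
    (hσB : σ (pB k q c d) = l • pB k q c d)
    (hσBs : σ (pBs k q c d) = l⁻¹ • pBs k q c d)
    (a b : PodlesAlg k q c d) :
    ((Lam q l).comp (π.comp (dg.comp (rep q c d e he).toLinearMap))) (a * b - σ b * a) = 0 := by
  set Φ : PodlesAlg k q c d →ₗ[k] k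
    := (Lam q l).comp (π.comp (dg.comp (rep q c d e he).toLinearMap)) with hΦdef
  have hΦ : ∀ x : PodlesAlg k q c d, Φ x = Lam q l (π (dg (rep q c d e he x))) := fun x => rfl
  have hΦ0 : ∀ x : PodlesAlg k q c d, dg (rep q c d e he x) = 0 → Φ x = 0 := by
    intro x h
    rw [hΦ, h, map_zero, map_zero]
  have hσAB : ∀ m n : ℕ, σ (pA k q c d ^ m * pB k q c d ^ n)
      = l ^ n • (pA k q c d ^ m * pB k q c d ^ n) := by
    intro m n
    rw [map_mul, map_pow, map_pow, hσA, hσB, smul_pow, mul_smul_comm]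
  have hσABs : ∀ m n : ℕ, σ (pA k q c d ^ m * pBs k q c d ^ n)
      = (l⁻¹) ^ n • (pA k q c d ^ m * pBs k q c d ^ n) := by
    intro m n
    rw [map_mul, map_pow, map_pow, hσA, hσBs, smul_pow, mul_smul_comm]
  have hrepAB : ∀ m n : ℕ, rep q c d e he (pA k q c d ^ m * pB k q c d ^ n)
      = opA q e ^ m * opB q c d e ^ n := by
    intro m n
    rw [map_mul, map_pow, map_pow, rep_pA, rep_pB]
  have hrepABs : ∀ m n : ℕ, rep q c d e he (pA k q c d ^ m * pBs k q c d ^ n)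
      = opA q e ^ m * opBs k ^ n := by
    intro m n
    rw [map_mul, map_pow, map_pow, rep_pA, rep_pBs]
  have hL : ∀ n M : ℕ, Lam q l (Polynomial.X ^ M * gP q c d e n)
      = (l⁻¹) ^ n * ((q ^ (2 * (n * M)))⁻¹
          * Lam q l (Polynomial.X ^ M * hPp q c d e n)) := by
    intro n M
    have h2 := L2 l he hq0 hl0 hl n (Polynomial.X ^ M)
    rw [Polynomial.X_pow_eq_monomial, scp_monomial, one_mul] at h2
    rw [show (((q⁻¹) ^ (2 * n)) ^ M) = (q ^ (2 * (n * M)))⁻¹ by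
      rw [← pow_mul, ← inv_pow]; congr 1; ring] at h2
    rw [show Polynomial.monomial M ((q ^ (2 * (n * M)))⁻¹)
        = Polynomial.C ((q ^ (2 * (n * M)))⁻¹) * Polynomial.X ^ M by
      rw [Polynomial.C_mul_X_pow_eq_monomial]] at h2
    rw [Polynomial.X_pow_eq_monomial, h2, mul_assoc, Lam_C_mul]
    rw [← Polynomial.X_pow_eq_monomial]
  have core : ∀ x ∈ Tset k q c d, ∀ y ∈ Tset k q c d, Φ (x * y - σ y * x) = 0 := by
    rintro x (⟨m, n, rfl⟩ | ⟨m, n, rfl⟩) y (⟨m', n', rfl⟩ | ⟨m', n', rfl⟩)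
    · -- B B case
      rw [hσAB m' n', map_sub, smul_mul_assoc, map_smul, smul_eq_mul]
      by_cases hz : n = 0 ∧ n' = 0
      · obtain ⟨rfl, rfl⟩ := hz
        simp only [pow_zero, mul_one, one_mul]
        rw [← pow_add, ← pow_add, Nat.add_comm m' m, sub_self]
      · have h : 0 < n + n' := by omega
        rw [hΦ0 _ (by rw [map_mul, hrepAB, hrepAB]; exact dg_BB he m n m' n' h),
          hΦ0 _ (by rw [map_mul, hrepAB, hrepAB]; exact dg_BB he m' n' m n (by omega))]
        simp
    · -- B Bs case
      rw [hσABs m' n', map_sub, smul_mul_assoc, map_smul, smul_eq_mul]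
      by_cases hnn : n = n'
      · subst hnn
        have hqn : (q ^ (2 * (n * m)) : k) ≠ 0 := pow_ne_zero _ hq0
        have hxy : Φ (pA k q c d ^ m * pB k q c d ^ n * (pA k q c d ^ m' * pBs k q c d ^ n))
            = e ^ (m + m') * q ^ (2 * (n * m'))
                * Lam q l (Polynomial.X ^ (m + m') * gP q c d e n) := by
          rw [hΦ, map_mul, hrepAB, hrepABs, dg_BBs_eq hq0, hπ, mul_assoc, Lam_C_mul, mul_assoc]
        have hyx : Φ (pA k q c d ^ m' * pBs k q c d ^ n * (pA k q c d ^ m * pB k q c d ^ n))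
            = (q ^ (2 * (n * m)))⁻¹
                * (e ^ (m + m') * Lam q l (Polynomial.X ^ (m + m') * hPp q c d e n)) := by
          have h1 : q ^ (2 * (n * m)) * Φ (pA k q c d ^ m' * pBs k q c d ^ n
              * (pA k q c d ^ m * pB k q c d ^ n))
              = e ^ (m + m') * Lam q l (Polynomial.X ^ (m + m') * hPp q c d e n) := by
            rw [hΦ, ← smul_eq_mul, ← map_smul, ← map_smul, map_mul, hrepABs, hrepAB,
              dg_BsB_eq he hq0, hπ, mul_assoc, Lam_C_mul]
          rw [← h1, ← mul_assoc ((q ^ (2 * (n * m)))⁻¹) (q ^ (2 * (n * m))),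
            inv_mul_cancel₀ hqn, one_mul]
        rw [hxy, hyx, hL n (m + m')]
        field_simp
        ring
      · rw [hΦ0 _ (by rw [map_mul, hrepAB, hrepABs]; exact dg_BBs_ne he m n m' n' hnn),
          hΦ0 _ (by rw [map_mul, hrepABs, hrepAB]; exact dg_BsB_ne he m' n' m n (Ne.symm hnn))]
        simp
    · -- Bs B case
      rw [hσAB m' n', map_sub, smul_mul_assoc, map_smul, smul_eq_mul]
      by_cases hnn : n = n'
      · subst hnn
        have hqn : (q ^ (2 * (n * m')) : k) ≠ 0 := pow_ne_zero _ hq0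
        have hxy : Φ (pA k q c d ^ m * pBs k q c d ^ n * (pA k q c d ^ m' * pB k q c d ^ n))
            = (q ^ (2 * (n * m')))⁻¹
                * (e ^ (m' + m) * Lam q l (Polynomial.X ^ (m' + m) * hPp q c d e n)) := by
          have h1 : q ^ (2 * (n * m')) * Φ (pA k q c d ^ m * pBs k q c d ^ n
              * (pA k q c d ^ m' * pB k q c d ^ n))
              = e ^ (m' + m) * Lam q l (Polynomial.X ^ (m' + m) * hPp q c d e n) := by
            rw [hΦ, ← smul_eq_mul, ← map_smul, ← map_smul, map_mul, hrepABs, hrepAB,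
              dg_BsB_eq he hq0, hπ, mul_assoc, Lam_C_mul]
          rw [← h1, ← mul_assoc ((q ^ (2 * (n * m')))⁻¹) (q ^ (2 * (n * m'))),
            inv_mul_cancel₀ hqn, one_mul]
        have hyx : Φ (pA k q c d ^ m' * pB k q c d ^ n * (pA k q c d ^ m * pBs k q c d ^ n))
            = e ^ (m' + m) * q ^ (2 * (n * m))
                * Lam q l (Polynomial.X ^ (m' + m) * gP q c d e n) := by
          rw [hΦ, map_mul, hrepAB, hrepABs, dg_BBs_eq hq0, hπ, mul_assoc, Lam_C_mul, mul_assoc]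
        rw [hxy, hyx, hL n (m' + m)]
        field_simp
        have hln : l ^ n * l⁻¹ ^ n = 1 := by rw [← mul_pow, mul_inv_cancel₀ hl0, one_pow]
        linear_combination (-(e ^ m' * e ^ m * (Lam q l) (Polynomial.X ^ (m' + m) * hPp q c d e n)
          * q ^ (m' * n * 2) * q ^ (m * n * 2))) * hln
      · rw [hΦ0 _ (by rw [map_mul, hrepABs, hrepAB]; exact dg_BsB_ne he m n m' n' hnn),
          hΦ0 _ (by rw [map_mul, hrepAB, hrepABs]; exact dg_BBs_ne he m' n' m n (Ne.symm hnn))]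
        simp
    · -- Bs Bs case
      rw [hσABs m' n', map_sub, smul_mul_assoc, map_smul, smul_eq_mul]
      by_cases hz : n = 0 ∧ n' = 0
      · obtain ⟨rfl, rfl⟩ := hz
        simp only [pow_zero, mul_one, one_mul, inv_one]
        rw [← pow_add, ← pow_add, Nat.add_comm m' m, sub_self]
      · have h : 0 < n + n' := by omega
        rw [hΦ0 _ (by rw [map_mul, hrepABs, hrepABs]; exact dg_BsBs (q := q) m n m' n' h),
          hΦ0 _ (by rw [map_mul, hrepABs, hrepABs]; exact dg_BsBs (q := q) m' n' m n (by omega))]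
        simp
  have hsp : ∀ x : PodlesAlg k q c d, x ∈ Submodule.span k (Tset k q c d) := by
    intro x
    rw [spanT_top hq0]
    exact Submodule.mem_top
  have H : ∀ a' ∈ Submodule.span k (Tset k q c d), ∀ b' ∈ Submodule.span k (Tset k q c d),
      Φ (a' * b' - σ b' * a') = 0 := by
    intro a' ha'
    induction ha' using Submodule.span_induction with
    | mem x hx =>
      intro b' hb'
      induction hb' using Submodule.span_induction with
      | mem y hy => exact core x hx y hy
      | zero => simp
      | add u v hu hv ihu ihv =>
        have hrw : x * (u + v) - σ (u + v) * x
            = (x * u - σ u * x) + (x * v - σ v * x) := by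
          rw [map_add]
          noncomm_ring
        rw [hrw, map_add, ihu, ihv, add_zero]
      | smul r u hu ihu =>
        have hrw : x * (r • u) - σ (r • u) * x = r • (x * u - σ u * x) := by
          rw [map_smul, smul_sub, mul_smul_comm, smul_mul_assoc]
        rw [hrw, map_smul, ihu, smul_zero]
    | zero => intro b' hb'; simp
    | add u v hu hv ihu ihv =>
      intro b' hb'
      have hrw : (u + v) * b' - σ b' * (u + v)
          = (u * b' - σ b' * u) + (v * b' - σ b' * v) := by noncomm_ring
      rw [hrw, map_add, ihu b' hb', ihv b' hb', add_zero]
    | smul r u hu ihu =>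
      intro b' hb'
      have hrw : (r • u) * b' - σ b' * (r • u) = r • (u * b' - σ b' * u) := by
        rw [smul_sub, mul_smul_comm, smul_mul_assoc]
      rw [hrw, map_smul, ihu b' hb', smul_zero]
  exact H a (hsp a) b (hsp b)

section Membership

variable (l : k) (σ : PodlesAlg k q c d ≃ₐ[k] PodlesAlg k q c d)
variable (N : Submodule k (PodlesAlg k q c d))

lemma sigma_AB (hσA : σ (pA k q c d) = pA k q c d) (hσB : σ (pB k q c d) = l • pB k q c d)
    (m n : ℕ) : σ (pA k q c d ^ m * pB k q c d ^ n)
      = l ^ n • (pA k q c d ^ m * pB k q c d ^ n) := by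
  rw [map_mul, map_pow, map_pow, hσA, hσB, smul_pow, mul_smul_comm]

lemma sigma_ABs (hσA : σ (pA k q c d) = pA k q c d)
    (hσBs : σ (pBs k q c d) = l⁻¹ • pBs k q c d)
    (m n : ℕ) : σ (pA k q c d ^ m * pBs k q c d ^ n)
      = (l⁻¹) ^ n • (pA k q c d ^ m * pBs k q c d ^ n) := by
  rw [map_mul, map_pow, map_pow, hσA, hσBs, smul_pow, mul_smul_comm]

variable (hN : N = Submodule.span k {x : PodlesAlg k q c d | ∃ a b, x = a * b - σ b * a})

include hN

lemma hgenN : ∀ a b : PodlesAlg k q c d, a * b - σ b * a ∈ N := by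
  intro a b
  rw [hN]
  exact Submodule.subset_span ⟨a, b, rfl⟩

lemma memN_AB (hq0 : q ≠ 0) (hl0 : l ≠ 0) (hl : ∀ n : ℕ, l ≠ (q ^ (2 * n))⁻¹)
    (hσA : σ (pA k q c d) = pA k q c d) (hσB : σ (pB k q c d) = l • pB k q c d)
    (m n : ℕ) (hn : 0 < n) : pA k q c d ^ m * pB k q c d ^ n ∈ N := by
  by_cases hln : l ^ n = 1
  · obtain ⟨nn, rfl⟩ : ∃ nn, n = nn + 1 := ⟨n - 1, by omega⟩
    have hel := hgenN σ N hN (pB k q c d) (pA k q c d ^ m * pB k q c d ^ nn)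
    have h1 : pB k q c d * (pA k q c d ^ m * pB k q c d ^ nn)
        = q ^ (2 * m) • (pA k q c d ^ m * pB k q c d ^ (nn + 1)) := by
      rw [← mul_assoc, pB_pApow, smul_mul_assoc, mul_assoc, ← pow_succ']
    have h2 : σ (pA k q c d ^ m * pB k q c d ^ nn) * pB k q c d
        = l ^ nn • (pA k q c d ^ m * pB k q c d ^ (nn + 1)) := by
      rw [sigma_AB l σ hσA hσB, smul_mul_assoc, mul_assoc, ← pow_succ]
    have h12 : pB k q c d * (pA k q c d ^ m * pB k q c d ^ nn)
          - σ (pA k q c d ^ m * pB k q c d ^ nn) * pB k q c d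
        = (q ^ (2 * m) - l ^ nn) • (pA k q c d ^ m * pB k q c d ^ (nn + 1)) := by
      rw [h1, h2]
      module
    rw [h12] at hel
    have hcoef : q ^ (2 * m) - l ^ nn ≠ 0 := by
      intro hco
      apply hl m
      have hlnn : l ^ nn = q ^ (2 * m) := by linear_combination -hco
      have : l * q ^ (2 * m) = 1 := by
        rw [← hlnn, ← pow_succ']
        exact hln
      exact eq_inv_of_mul_eq_one_left this
    have := Submodule.smul_mem N (q ^ (2 * m) - l ^ nn)⁻¹ hel
    rwa [inv_smul_smul₀ hcoef] at this
  · have hel := hgenN σ N hN 1 (pA k q c d ^ m * pB k q c d ^ n)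
    rw [one_mul, mul_one, sigma_AB l σ hσA hσB] at hel
    have h3 : pA k q c d ^ m * pB k q c d ^ n
          - l ^ n • (pA k q c d ^ m * pB k q c d ^ n)
        = (1 - l ^ n) • (pA k q c d ^ m * pB k q c d ^ n) := by
      module
    rw [h3] at hel
    have hcoef : (1 : k) - l ^ n ≠ 0 := fun hco => hln (by linear_combination -hco)
    have := Submodule.smul_mem N (1 - l ^ n)⁻¹ hel
    rwa [inv_smul_smul₀ hcoef] at this

lemma memN_ABs (hq0 : q ≠ 0) (hl0 : l ≠ 0) (hl : ∀ n : ℕ, l ≠ (q ^ (2 * n))⁻¹)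
    (hσA : σ (pA k q c d) = pA k q c d) (hσBs : σ (pBs k q c d) = l⁻¹ • pBs k q c d)
    (m n : ℕ) (hn : 0 < n) : pA k q c d ^ m * pBs k q c d ^ n ∈ N := by
  by_cases hln : l ^ n = 1
  · obtain ⟨nn, rfl⟩ : ∃ nn, n = nn + 1 := ⟨n - 1, by omega⟩
    have hel := hgenN σ N hN (pBs k q c d) (pA k q c d ^ m * pBs k q c d ^ nn)
    have h1 : pBs k q c d * (pA k q c d ^ m * pBs k q c d ^ nn)
        = (q ^ (2 * m))⁻¹ • (pA k q c d ^ m * pBs k q c d ^ (nn + 1)) := by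
      rw [← mul_assoc, show pBs k q c d * pA k q c d ^ m
          = pBs k q c d ^ 1 * pA k q c d ^ m by rw [pow_one], pBspow_pApow hq0,
        smul_mul_assoc, mul_assoc, pow_one, ← pow_succ', mul_one]
    have h2 : σ (pA k q c d ^ m * pBs k q c d ^ nn) * pBs k q c d
        = (l⁻¹) ^ nn • (pA k q c d ^ m * pBs k q c d ^ (nn + 1)) := by
      rw [sigma_ABs l σ hσA hσBs, smul_mul_assoc, mul_assoc, ← pow_succ]
    have h12 : pBs k q c d * (pA k q c d ^ m * pBs k q c d ^ nn)
          - σ (pA k q c d ^ m * pBs k q c d ^ nn) * pBs k q c d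
        = ((q ^ (2 * m))⁻¹ - (l⁻¹) ^ nn) • (pA k q c d ^ m * pBs k q c d ^ (nn + 1)) := by
      rw [h1, h2]
      module
    rw [h12] at hel
    have hlnn : (l⁻¹ : k) ^ nn = l := by
      rw [inv_pow]
      rw [show l ^ nn = l⁻¹ by
        apply eq_inv_of_mul_eq_one_left
        rw [← pow_succ]
        exact hln]
      exact inv_inv l
    have hcoef : (q ^ (2 * m))⁻¹ - (l⁻¹) ^ nn ≠ 0 := by
      rw [hlnn]
      intro hco
      apply hl m
      have : l = (q ^ (2 * m))⁻¹ := by linear_combination -hco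
      exact this
    have := Submodule.smul_mem N ((q ^ (2 * m))⁻¹ - (l⁻¹) ^ nn)⁻¹ hel
    rwa [inv_smul_smul₀ hcoef] at this
  · have hel := hgenN σ N hN 1 (pA k q c d ^ m * pBs k q c d ^ n)
    rw [one_mul, mul_one, sigma_ABs l σ hσA hσBs] at hel
    have h3 : pA k q c d ^ m * pBs k q c d ^ n
          - (l⁻¹) ^ n • (pA k q c d ^ m * pBs k q c d ^ n)
        = (1 - (l⁻¹) ^ n) • (pA k q c d ^ m * pBs k q c d ^ n) := by
      module
    rw [h3] at hel
    have hcoef : (1 : k) - (l⁻¹) ^ n ≠ 0 := by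
      rw [inv_pow]
      intro hco
      apply hln
      have h4 : (l ^ n)⁻¹ = 1 := by linear_combination -hco
      rw [← inv_inv (l ^ n), h4, inv_one]
    have := Submodule.smul_mem N (1 - (l⁻¹) ^ n)⁻¹ hel
    rwa [inv_smul_smul₀ hcoef] at this

lemma pApow_mem (hq0 : q ≠ 0) (hl0 : l ≠ 0) (hl : ∀ n : ℕ, l ≠ (q ^ (2 * n))⁻¹)
    (hσBs : σ (pBs k q c d) = l⁻¹ • pBs k q c d) :
    ∀ t : ℕ, pA k q c d ^ t ∈ N ⊔ Submodule.span k {1, pA k q c d} := by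
  intro t
  induction t using Nat.strong_induction_on with
  | _ t ih =>
    match t with
    | 0 =>
      rw [pow_zero]
      exact Submodule.mem_sup_right (Submodule.subset_span (by simp))
    | 1 =>
      rw [pow_one]
      exact Submodule.mem_sup_right (Submodule.subset_span (by simp))
    | (s + 2) =>
      set μ : k := l⁻¹ * (q ^ (2 * s))⁻¹ with hμdef
      have h1 : (pA k q c d ^ s * pB k q c d) * pBs k q c d
          = (c * d) • pA k q c d ^ s + (q ^ 2 * (c - d)) • pA k q c d ^ (s + 1)
            - q ^ 4 • pA k q c d ^ (s + 2) := by
        rw [mul_assoc, rBBs, mul_sub, mul_add, mul_smul_comm, mul_smul_comm,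
          ← Algebra.commutes, ← Algebra.smul_def, ← pow_succ, ← pow_add]
      have h2 : pBs k q c d * (pA k q c d ^ s * pB k q c d)
          = (q ^ (2 * s))⁻¹ • ((c * d) • pA k q c d ^ s + (c - d) • pA k q c d ^ (s + 1)
              - pA k q c d ^ (s + 2)) := by
        rw [← mul_assoc, show pBs k q c d * pA k q c d ^ s
            = pBs k q c d ^ 1 * pA k q c d ^ s by rw [pow_one], pBspow_pApow hq0,
          pow_one, mul_one, smul_mul_assoc, mul_assoc, rBsB, mul_sub, mul_add, mul_smul_comm,
          ← Algebra.commutes, ← Algebra.smul_def, ← pow_succ, ← pow_add]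
      have hexp : (pA k q c d ^ s * pB k q c d) * pBs k q c d
            - σ (pBs k q c d) * (pA k q c d ^ s * pB k q c d)
          = (c * d * (1 - μ)) • pA k q c d ^ s
            + ((q ^ 2 - μ) * (c - d)) • pA k q c d ^ (s + 1)
            - (q ^ 4 - μ) • pA k q c d ^ (s + 2) := by
        rw [h1, hσBs, smul_mul_assoc, h2, smul_smul, hμdef]
        module
      have hw : ((c * d * (1 - μ)) • pA k q c d ^ s
            + ((q ^ 2 - μ) * (c - d)) • pA k q c d ^ (s + 1)
            - (q ^ 4 - μ) • pA k q c d ^ (s + 2)) ∈ N := by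
        rw [← hexp]
        exact hgenN σ N hN _ _
      have hγ : (q ^ 4 - μ : k) ≠ 0 := by
        intro heq
        apply hl (s + 2)
        have hq2s : (q ^ (2 * s) : k) ≠ 0 := pow_ne_zero _ hq0
        have h4 : l * q ^ (2 * (s + 2)) = 1 := by
          rw [show 2 * (s + 2) = 2 * s + 4 by ring, pow_add]
          have : q ^ 4 = μ := by linear_combination heq
          rw [hμdef] at this
          field_simp at this
          linear_combination this
        exact eq_inv_of_mul_eq_one_left h4
      have hstep : (c * d * (1 - μ)) • pA k q c d ^ s
            + ((q ^ 2 - μ) * (c - d)) • pA k q c d ^ (s + 1)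
            - ((c * d * (1 - μ)) • pA k q c d ^ s
              + ((q ^ 2 - μ) * (c - d)) • pA k q c d ^ (s + 1)
              - (q ^ 4 - μ) • pA k q c d ^ (s + 2))
          = (q ^ 4 - μ) • pA k q c d ^ (s + 2) := by
        module
      have hfin : pA k q c d ^ (s + 2)
          = (q ^ 4 - μ)⁻¹ • ((c * d * (1 - μ)) • pA k q c d ^ s
              + ((q ^ 2 - μ) * (c - d)) • pA k q c d ^ (s + 1)
              - ((c * d * (1 - μ)) • pA k q c d ^ s
                + ((q ^ 2 - μ) * (c - d)) • pA k q c d ^ (s + 1)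
                - (q ^ 4 - μ) • pA k q c d ^ (s + 2))) := by
        rw [hstep, smul_smul, inv_mul_cancel₀ hγ, one_smul]
      rw [hfin]
      apply Submodule.smul_mem
      apply Submodule.sub_mem
      · apply Submodule.add_mem
        · exact Submodule.smul_mem _ _ (ih s (by omega))
        · exact Submodule.smul_mem _ _ (ih (s + 1) (by omega))
      · exact Submodule.mem_sup_left hw

end Membership

lemma Phi_one (l : k) (he : c * d + (c - d) * e - e ^ 2 = 0)
    (π : (ℕ → k) →ₗ[k] Polynomial k) (hπ : ∀ p, π (evp q p) = p) :
    Lam q l (π (dg (rep q c d e he (1 : PodlesAlg k q c d)))) = (1 - l)⁻¹ := by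
  have h1 : dg (rep q c d e he (1 : PodlesAlg k q c d)) = evp q 1 := by
    rw [map_one]
    funext j
    rw [dg_apply, evp_apply, Polynomial.eval_one]
    rw [Module.End.one_apply]
    simp
  rw [h1, hπ, show (1 : Polynomial k) = Polynomial.monomial 0 1 from
    (Polynomial.monomial_zero_one).symm, Lam_monomial]
  norm_num

lemma Phi_pA (l : k) (he : c * d + (c - d) * e - e ^ 2 = 0)
    (π : (ℕ → k) →ₗ[k] Polynomial k) (hπ : ∀ p, π (evp q p) = p) :
    Lam q l (π (dg (rep q c d e he (pA k q c d)))) = e * (1 - l * q ^ 2)⁻¹ := by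
  have h1 : dg (rep q c d e he (pA k q c d)) = evp q (Polynomial.C e * Polynomial.X) := by
    rw [rep_pA]
    funext j
    rw [dg_apply, evp_apply, Polynomial.eval_mul, Polynomial.eval_C, Polynomial.eval_X]
    rw [opA_single]
    simp
  rw [h1, hπ, Lam_C_mul, show (Polynomial.X : Polynomial k) = Polynomial.monomial 1 1 by
    rw [← Polynomial.X_pow_eq_monomial, pow_one], Lam_monomial]
  norm_num

end PodlesHH

open PodlesHH

/-- For `σ = σ_λ` with `λ ∉ {q^{-2n} : n ∈ ℕ}` (in particular `λ ≠ 1`), the zeroth twisted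
Hochschild homology `HH₀^σ(A) = A / span{a₁a₂ − σ(a₂)a₁}` of `A = A(c,d)` is 2-dimensional,
spanned by the classes `[1]` and `[A]`. -/
theorem podles_HH0_two_dimensional (k : Type) [Field k] [CharZero k] (q c d : k)
    (hq0 : q ≠ 0) (hq : ∀ n : ℕ, 0 < n → q ^ n ≠ 1) (hcd : c + d ≠ 0)
    (l : k) (hl0 : l ≠ 0) (hl : ∀ n : ℕ, l ≠ (q ^ (2 * n))⁻¹)
    (σ : PodlesAlg k q c d ≃ₐ[k] PodlesAlg k q c d)
    (hσA : σ (pA k q c d) = pA k q c d)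
    (hσB : σ (pB k q c d) = l • pB k q c d)
    (hσBs : σ (pBs k q c d) = l⁻¹ • pBs k q c d)
    (N : Submodule k (PodlesAlg k q c d))
    (hN : N = Submodule.span k {x : PodlesAlg k q c d | ∃ a b, x = a * b - σ b * a}) :
    LinearIndependent k ![N.mkQ 1, N.mkQ (pA k q c d)] ∧
    Submodule.span k {N.mkQ 1, N.mkQ (pA k q c d)} = ⊤ := by
  constructor
  · -- linear independence via the two twisted traces
    rw [LinearIndependent.pair_iff]
    intro s t hst
    have hz : s • (1 : PodlesAlg k q c d) + t • pA k q c d ∈ N := by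
      have hmk : N.mkQ (s • (1 : PodlesAlg k q c d) + t • pA k q c d) = 0 := by
        rw [map_add, map_smul, map_smul]
        exact hst
      rw [Submodule.mkQ_apply, Submodule.Quotient.mk_eq_zero] at hmk
      exact hmk
    obtain ⟨π, hπc⟩ := LinearMap.exists_leftInverse_of_injective (evp q)
      (evp_injective hq0 hq)
    have hπ : ∀ p, π (evp q p) = p := by
      intro p
      have := LinearMap.congr_fun hπc p
      simpa using this
    have hec : c * d + (c - d) * c - c ^ 2 = 0 := by ring
    have hed : c * d + (c - d) * (-d) - (-d) ^ 2 = 0 := by ring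
    have hEq : ∀ (e : k) (he : c * d + (c - d) * e - e ^ 2 = 0),
        s * (1 - l)⁻¹ + t * (e * (1 - l * q ^ 2)⁻¹) = 0 := by
      intro e he
      set F : PodlesAlg k q c d →ₗ[k] k
        := (Lam q l).comp (π.comp (dg.comp (rep q c d e he).toLinearMap)) with hF
      have hker : N ≤ LinearMap.ker F := by
        rw [hN, Submodule.span_le]
        rintro _ ⟨a', b', rfl⟩
        rw [SetLike.mem_coe, LinearMap.mem_ker]
        exact Phi_comm_vanish l he hq0 hl0 hl π hπ σ hσA hσB hσBs a' b'
      have h0 : F (s • (1 : PodlesAlg k q c d) + t • pA k q c d) = 0 :=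
        LinearMap.mem_ker.mp (hker hz)
      rw [map_add, map_smul, map_smul] at h0
      have hF1 : F (1 : PodlesAlg k q c d) = (1 - l)⁻¹ := Phi_one l he π hπ
      have hFA : F (pA k q c d) = e * (1 - l * q ^ 2)⁻¹ := Phi_pA l he π hπ
      rw [hF1, hFA, smul_eq_mul, smul_eq_mul] at h0
      exact h0
    have hc' := hEq c hec
    have hd' := hEq (-d) hed
    have hw1 : ((1 : k) - l * q ^ 2)⁻¹ ≠ 0 := by
      apply inv_ne_zero
      have := wgt_ne l hq0 hl 1
      norm_num at this
      convert this using 2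
    have hw0 : ((1 : k) - l)⁻¹ ≠ 0 := by
      apply inv_ne_zero
      have := wgt_ne l hq0 hl 0
      norm_num at this
      exact this
    have ht : t = 0 := by
      have h5 : t * ((c + d) * (1 - l * q ^ 2)⁻¹) = 0 := by linear_combination hc' - hd'
      rcases mul_eq_zero.mp h5 with h | h
      · exact h
      · exact absurd h (mul_ne_zero hcd hw1)
    refine ⟨?_, ht⟩
    rw [ht] at hc'
    have h6 : s * (1 - l)⁻¹ = 0 := by linear_combination hc'
    rcases mul_eq_zero.mp h6 with h | h
    · exact h
    · exact absurd h hw0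
  · -- spanning
    have hPtop : N ⊔ Submodule.span k {1, pA k q c d} = ⊤ := by
      rw [eq_top_iff]
      intro x _
      have hx : x ∈ Submodule.span k (Tset k q c d) := by
        rw [spanT_top hq0]
        trivial
      refine Submodule.span_le.mpr ?_ hx
      rintro z (⟨m, n, rfl⟩ | ⟨m, n, rfl⟩)
      · rcases Nat.eq_zero_or_pos n with rfl | hn
        · rw [pow_zero, mul_one]
          exact pApow_mem l σ N hN hq0 hl0 hl hσBs m
        · exact Submodule.mem_sup_left (memN_AB l σ N hN hq0 hl0 hl hσA hσB m n hn)
      · rcases Nat.eq_zero_or_pos n with rfl | hn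
        · rw [pow_zero, mul_one]
          exact pApow_mem l σ N hN hq0 hl0 hl hσBs m
        · exact Submodule.mem_sup_left (memN_ABs l σ N hN hq0 hl0 hl hσA hσBs m n hn)
    have hmap : Submodule.map N.mkQ (N ⊔ Submodule.span k {1, pA k q c d}) = ⊤ := by
      rw [hPtop, Submodule.map_top, Submodule.range_mkQ]
    rw [Submodule.map_sup] at hmap
    have hmapN : Submodule.map N.mkQ N = ⊥ := by
      rw [eq_bot_iff]
      rintro _ ⟨x, hx, rfl⟩
      rw [Submodule.mem_bot, Submodule.mkQ_apply, Submodule.Quotient.mk_eq_zero]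
      exact hx
    have hmaps : Submodule.map N.mkQ (Submodule.span k {1, pA k q c d})
        = Submodule.span k {N.mkQ 1, N.mkQ (pA k q c d)} := by
      rw [Submodule.map_span]
      congr 1
      rw [Set.image_insert_eq, Set.image_singleton]
    rw [hmapN, hmaps, bot_sup_eq] at hmap
    exact hmap
end

section
/- For A = A(c,c) and the automorphism τ_λ (τ(A) = −A, τ(B) = λB, τ(B*) = λ^{-1}B*), the class [A^{n+1}] vanishes in HH_0^{τ_λ}(A) for every n ≥ 0; in particular if λ ≠ 1 then HH_0^{τ_λ}(A) is spanned by [1]. -/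
section helpers

lemma pow_comm_aux {k R : Type} [Field k] [Ring R] [Algebra k R] {x y : R} {s : k}
    (h : y * x = s • (x * y)) (j : ℕ) : y ^ j * x = s ^ j • (x * y ^ j) := by
  induction j with
  | zero => simp
  | succ n ih =>
      rw [pow_succ, mul_assoc, h, mul_smul_comm, ← mul_assoc, ih, smul_mul_assoc,
        smul_smul, mul_assoc, ← pow_succ, ← pow_succ']

lemma comm_sq_aux {k R : Type} [Field k] [Ring R] [Algebra k R] {x y : R} {t : k}
    (h : y * x = t • (x * y)) : y * (x * x) = (t * t) • (x * x * y) := by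
  rw [← mul_assoc, h, smul_mul_assoc, mul_assoc, h, mul_smul_comm, smul_smul, ← mul_assoc]

variable {k : Type} [Field k] {q c : k}

local notation "gA" => pA k q c c
local notation "gB" => pB k q c c
local notation "gBs" => pBs k q c c

lemma relBA : gB * gA = q ^ 2 • (gA * gB) := by
  have := RingQuot.mkAlgHom_rel k (PodlesRel.BA (k := k) (q := q) (c := c) (d := c))
  simpa [pA, pB, map_mul, map_smul] using this

lemma relABs : gA * gBs = q ^ 2 • (gBs * gA) := by
  have := RingQuot.mkAlgHom_rel k (PodlesRel.ABs (k := k) (q := q) (c := c) (d := c))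
  simpa [pA, pBs, map_mul, map_smul] using this

lemma relBsB : gBs * gB = algebraMap k _ (c * c) - gA ^ 2 := by
  have := RingQuot.mkAlgHom_rel k (PodlesRel.BsB (k := k) (q := q) (c := c) (d := c))
  simpa [pA, pB, pBs, map_mul, map_smul, map_pow, sub_self] using this

lemma relBBs : gB * gBs = algebraMap k _ (c * c) - q ^ 4 • gA ^ 2 := by
  have := RingQuot.mkAlgHom_rel k (PodlesRel.BBs (k := k) (q := q) (c := c) (d := c))
  simpa [pA, pB, pBs, map_mul, map_smul, map_pow, sub_self] using this

lemma relBsA (hq0 : q ≠ 0) : gBs * gA = (q⁻¹) ^ 2 • (gA * gBs) := by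
  rw [relABs, smul_smul, inv_pow, inv_mul_cancel₀ (pow_ne_zero _ hq0), one_smul]

/-- The monomials `A^i B^j` and `A^i B*^j` span `A(c,c)`. -/
lemma podles_span_top (hq0 : q ≠ 0) :
    (Submodule.span k
      ({x : PodlesAlg k q c c | ∃ i j : ℕ, x = gA ^ i * gB ^ j} ∪
       {x : PodlesAlg k q c c | ∃ i j : ℕ, x = gA ^ i * gBs ^ j})) = ⊤ := by
  set M := Submodule.span k
      ({x : PodlesAlg k q c c | ∃ i j : ℕ, x = gA ^ i * gB ^ j} ∪
       {x : PodlesAlg k q c c | ∃ i j : ℕ, x = gA ^ i * gBs ^ j}) with hM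
  have memB : ∀ i j : ℕ, gA ^ i * gB ^ j ∈ M := fun i j =>
    Submodule.subset_span (Or.inl ⟨i, j, rfl⟩)
  have memBs : ∀ i j : ℕ, gA ^ i * gBs ^ j ∈ M := fun i j =>
    Submodule.subset_span (Or.inr ⟨i, j, rfl⟩)
  have hBjA : ∀ j : ℕ, gB ^ j * gA = (q ^ 2) ^ j • (gA * gB ^ j) :=
    pow_comm_aux relBA
  have hBsjA : ∀ j : ℕ, gBs ^ j * gA = ((q⁻¹) ^ 2) ^ j • (gA * gBs ^ j) :=
    pow_comm_aux (relBsA hq0)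
  -- closure of monomials under right multiplication by the generators
  have hBA' : ∀ i j : ℕ, (gA ^ i * gB ^ j) * gA ∈ M := by
    intro i j
    rw [mul_assoc, hBjA, mul_smul_comm, ← mul_assoc, ← pow_succ]
    exact Submodule.smul_mem _ _ (memB _ _)
  have hBsA' : ∀ i j : ℕ, (gA ^ i * gBs ^ j) * gA ∈ M := by
    intro i j
    rw [mul_assoc, hBsjA, mul_smul_comm, ← mul_assoc, ← pow_succ]
    exact Submodule.smul_mem _ _ (memBs _ _)
  have hBB' : ∀ i j : ℕ, (gA ^ i * gB ^ j) * gB ∈ M := by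
    intro i j
    rw [mul_assoc, ← pow_succ]
    exact memB _ _
  have hBsBs' : ∀ i j : ℕ, (gA ^ i * gBs ^ j) * gBs ∈ M := by
    intro i j
    rw [mul_assoc, ← pow_succ]
    exact memBs _ _
  have hBBs' : ∀ i j : ℕ, (gA ^ i * gB ^ j) * gBs ∈ M := by
    intro i j
    cases j with
    | zero =>
        have : (gA ^ i * gB ^ 0) * gBs = gA ^ i * gBs ^ 1 := by
          rw [pow_zero, mul_one, pow_one]
        rw [this]; exact memBs _ _
    | succ j =>
        have e1 : (gA ^ i * gB ^ (j + 1)) * gBs = gA ^ i * (gB ^ j * (gB * gBs)) := by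
          rw [pow_succ, mul_assoc, mul_assoc]
        have e2 : gB ^ j * (gB * gBs)
            = (c * c) • gB ^ j - ((q ^ 2) ^ j * (q ^ 2) ^ j * q ^ 4) • (gA * gA * gB ^ j) := by
          rw [relBBs, mul_sub, mul_smul_comm, sq, comm_sq_aux (hBjA j),
            ← Algebra.commutes, ← Algebra.smul_def, smul_smul, mul_comm (q ^ 4)]
        have e3 : gA ^ i * (gA * gA * gB ^ j) = gA ^ (i + 2) * gB ^ j := by
          rw [← mul_assoc, ← mul_assoc, ← pow_succ, ← pow_succ]
        rw [e1, e2, mul_sub, mul_smul_comm, mul_smul_comm, e3]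
        exact sub_mem (Submodule.smul_mem _ _ (memB _ _)) (Submodule.smul_mem _ _ (memB _ _))
  have hBsB' : ∀ i j : ℕ, (gA ^ i * gBs ^ j) * gB ∈ M := by
    intro i j
    cases j with
    | zero =>
        have : (gA ^ i * gBs ^ 0) * gB = gA ^ i * gB ^ 1 := by
          rw [pow_zero, mul_one, pow_one]
        rw [this]; exact memB _ _
    | succ j =>
        have e1 : (gA ^ i * gBs ^ (j + 1)) * gB = gA ^ i * (gBs ^ j * (gBs * gB)) := by
          rw [pow_succ, mul_assoc, mul_assoc]
        have e2 : gBs ^ j * (gBs * gB)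
            = (c * c) • gBs ^ j
              - (((q⁻¹) ^ 2) ^ j * ((q⁻¹) ^ 2) ^ j) • (gA * gA * gBs ^ j) := by
          rw [relBsB, mul_sub, sq, comm_sq_aux (hBsjA j),
            ← Algebra.commutes, ← Algebra.smul_def]
        have e3 : gA ^ i * (gA * gA * gBs ^ j) = gA ^ (i + 2) * gBs ^ j := by
          rw [← mul_assoc, ← mul_assoc, ← pow_succ, ← pow_succ]
        rw [e1, e2, mul_sub, mul_smul_comm, mul_smul_comm, e3]
        exact sub_mem (Submodule.smul_mem _ _ (memBs _ _)) (Submodule.smul_mem _ _ (memBs _ _))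
  -- closure of M under right multiplication by the generators
  have stepM : ∀ (i : Fin 3), ∀ x ∈ M,
      x * RingQuot.mkAlgHom k (PodlesRel k q c c) (FreeAlgebra.ι k i) ∈ M := by
    intro i x hx
    induction hx using Submodule.span_induction with
    | mem y hy =>
        fin_cases i
        · rcases hy with ⟨i, j, rfl⟩ | ⟨i, j, rfl⟩
          · exact hBA' i j
          · exact hBsA' i j
        · rcases hy with ⟨i, j, rfl⟩ | ⟨i, j, rfl⟩
          · exact hBB' i j
          · exact hBsB' i j
        · rcases hy with ⟨i, j, rfl⟩ | ⟨i, j, rfl⟩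
          · exact hBBs' i j
          · exact hBsBs' i j
    | zero => rw [zero_mul]; exact zero_mem _
    | add a b _ _ ha hb => rw [add_mul]; exact add_mem ha hb
    | smul a x _ hx => rw [smul_mul_assoc]; exact Submodule.smul_mem _ _ hx
  have key : ∀ (y : FreeAlgebra k (Fin 3)), ∀ x ∈ M,
      x * RingQuot.mkAlgHom k (PodlesRel k q c c) y ∈ M := by
    intro y
    induction y using FreeAlgebra.induction with
    | grade0 r =>
        intro x hx
        rw [AlgHom.commutes, ← Algebra.commutes, ← Algebra.smul_def]
        exact Submodule.smul_mem _ _ hx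
    | grade1 i => exact stepM i
    | mul a b ha hb =>
        intro x hx
        rw [map_mul, ← mul_assoc]
        exact hb _ (ha _ hx)
    | add a b ha hb =>
        intro x hx
        rw [map_add, mul_add]
        exact add_mem (ha _ hx) (hb _ hx)
  rw [Submodule.eq_top_iff']
  intro x
  obtain ⟨y, rfl⟩ := RingQuot.mkAlgHom_surjective k (PodlesRel k q c c) x
  have h1 : (1 : PodlesAlg k q c c) ∈ M := by
    have : (1 : PodlesAlg k q c c) = gA ^ 0 * gB ^ 0 := by simp
    rw [this]; exact memB 0 0
  simpa using key y 1 h1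

end helpers

/-- For `A = A(c,c)` and the automorphism `τ_λ` (`τ(A) = −A`, `τ(B) = λB`, `τ(B*) = λ⁻¹B*`),
the class `[A^{n+1}]` vanishes in `HH₀^{τ_λ}(A)` for every `n ≥ 0`; in particular if `λ ≠ 1`
then `HH₀^{τ_λ}(A)` is spanned by `[1]`. -/
theorem podles_tau_HH0 (k : Type) [Field k] [CharZero k] (q c : k)
    (hq0 : q ≠ 0) (hq : ∀ n : ℕ, 0 < n → q ^ n ≠ 1) (hc : (2 : k) * c ≠ 0)
    (l : k) (hl0 : l ≠ 0)
    (τ : PodlesAlg k q c c ≃ₐ[k] PodlesAlg k q c c)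
    (hτA : τ (pA k q c c) = - pA k q c c)
    (hτB : τ (pB k q c c) = l • pB k q c c)
    (hτBs : τ (pBs k q c c) = l⁻¹ • pBs k q c c)
    (N : Submodule k (PodlesAlg k q c c))
    (hN : N = Submodule.span k {x : PodlesAlg k q c c | ∃ a b, x = a * b - τ b * a}) :
    (∀ n : ℕ, N.mkQ ((pA k q c c) ^ (n + 1)) = 0) ∧
    (l ≠ 1 → Submodule.span k {N.mkQ 1} = ⊤) := by
  classical
  have smul_cancel : ∀ {t : k} (_ : t ≠ 0) {x : PodlesAlg k q c c ⧸ N},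
      t • x = 0 → x = 0 := by
    intro t ht x h
    have h2 := congrArg (fun y => t⁻¹ • y) h
    simpa [smul_smul, inv_mul_cancel₀ ht] using h2
  have memN : ∀ a b : PodlesAlg k q c c, a * b - τ b * a ∈ N := by
    intro a b; rw [hN]; exact Submodule.subset_span ⟨a, b, rfl⟩
  have hzero : ∀ x ∈ N, N.mkQ x = 0 := by
    intro x hx
    rw [Submodule.mkQ_apply]
    exact (Submodule.Quotient.mk_eq_zero N).mpr hx
  have cancel : ∀ (t : k) (x : PodlesAlg k q c c), t ≠ 0 →
      N.mkQ (t • x) = 0 → N.mkQ x = 0 := by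
    intro t x ht h
    exact smul_cancel ht ((N.mkQ.map_smul t x).symm.trans h)
  constructor
  · -- [A^(n+1)] = 0
    intro n
    have hdouble : N.mkQ ((pA k q c c) ^ (n + 1) + (pA k q c c) ^ (n + 1)) = 0 := by
      rcases Nat.even_or_odd n with he | ho
      · -- n even, so n + 1 is odd and τ(A^(n+1)) = -A^(n+1)
        have ht : τ ((pA k q c c) ^ (n + 1)) = -((pA k q c c) ^ (n + 1)) := by
          rw [map_pow, hτA]
          exact Odd.neg_pow (α := PodlesAlg k q c c) (Even.add_one he) _
        have e : (1 : PodlesAlg k q c c) * (pA k q c c) ^ (n + 1)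
            - τ ((pA k q c c) ^ (n + 1)) * 1
            = (pA k q c c) ^ (n + 1) + (pA k q c c) ^ (n + 1) := by
          rw [ht]; noncomm_ring
        rw [← e]; exact hzero _ (memN _ _)
      · -- n odd, so τ(A^n) = -A^n
        have ht : τ ((pA k q c c) ^ n) = -((pA k q c c) ^ n) := by
          rw [map_pow, hτA]
          exact Odd.neg_pow (α := PodlesAlg k q c c) ho _
        have eneg : (-((pA k q c c) ^ n)) * pA k q c c = -((pA k q c c) ^ (n + 1)) := by
          calc (-((pA k q c c) ^ n)) * pA k q c c
              = -((pA k q c c) ^ n * pA k q c c) := neg_mul (α := PodlesAlg k q c c) _ _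
            _ = -((pA k q c c) ^ (n + 1)) := by rw [← pow_succ]
        have e : pA k q c c * (pA k q c c) ^ n - τ ((pA k q c c) ^ n) * pA k q c c
            = (pA k q c c) ^ (n + 1) + (pA k q c c) ^ (n + 1) := by
          rw [ht, eneg, ← pow_succ']; noncomm_ring
        rw [← e]; exact hzero _ (memN _ _)
    rw [map_add] at hdouble
    exact smul_cancel (two_ne_zero (α := k)) ((two_smul k _).trans hdouble)
  · -- span = ⊤ when l ≠ 1
    intro hl1
    have coeffB : ∀ j : ℕ, (q ^ 2) ^ j + 1 ≠ 0 := by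
      intro j h
      have hv : (q ^ 2) ^ j = -1 := eq_neg_of_add_eq_zero_left h
      rcases Nat.eq_zero_or_pos j with rfl | hj
      · rw [pow_zero] at hv; norm_num at hv
      · have h2 : q ^ (2 * j) = -1 := by rw [pow_mul]; exact hv
        have h4 : q ^ (2 * j) * q ^ (2 * j) = 1 := by rw [h2]; ring
        rw [← pow_add] at h4
        exact hq (2 * j + 2 * j) (by omega) h4
    have coeffBs : ∀ j : ℕ, ((q⁻¹) ^ 2) ^ j + 1 ≠ 0 := by
      intro j h
      have hv : ((q⁻¹) ^ 2) ^ j = -1 := eq_neg_of_add_eq_zero_left h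
      rcases Nat.eq_zero_or_pos j with rfl | hj
      · rw [pow_zero] at hv; norm_num at hv
      · have h2 : (q ^ (2 * j))⁻¹ = -1 := by
          rw [← inv_pow, pow_mul]; exact hv
        have h2' : q ^ (2 * j) = -1 := by
          rw [inv_eq_iff_eq_inv] at h2; rw [h2]; norm_num
        have h4 : q ^ (2 * j) * q ^ (2 * j) = 1 := by rw [h2']; ring
        rw [← pow_add] at h4
        exact hq (2 * j + 2 * j) (by omega) h4
    -- vanishing of classes of nonconstant monomials
    have vB : ∀ i j : ℕ, i + j ≠ 0 → N.mkQ ((pA k q c c) ^ i * (pB k q c c) ^ j) = 0 := by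
      intro i j hij
      cases i with
      | succ i =>
          have hmem := memN ((pA k q c c) ^ i * (pB k q c c) ^ j) (pA k q c c)
          have e2 : pA k q c c * ((pA k q c c) ^ i * (pB k q c c) ^ j)
              = (pA k q c c) ^ (i + 1) * (pB k q c c) ^ j := by
            rw [← mul_assoc, ← pow_succ']
          have e1 : ((pA k q c c) ^ i * (pB k q c c) ^ j) * pA k q c c
              = (q ^ 2) ^ j • ((pA k q c c) ^ (i + 1) * (pB k q c c) ^ j) := by
            rw [mul_assoc, pow_comm_aux relBA j, mul_smul_comm, ← mul_assoc, ← pow_succ]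
          have e3 : τ (pA k q c c) * ((pA k q c c) ^ i * (pB k q c c) ^ j)
              = -((pA k q c c) ^ (i + 1) * (pB k q c c) ^ j) := by
            calc τ (pA k q c c) * ((pA k q c c) ^ i * (pB k q c c) ^ j)
                = (-(pA k q c c)) * ((pA k q c c) ^ i * (pB k q c c) ^ j) := by rw [hτA]
              _ = -(pA k q c c * ((pA k q c c) ^ i * (pB k q c c) ^ j)) :=
                  neg_mul (α := PodlesAlg k q c c) _ _
              _ = -((pA k q c c) ^ (i + 1) * (pB k q c c) ^ j) := by rw [e2]
          have heq : ((pA k q c c) ^ i * (pB k q c c) ^ j) * pA k q c c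
              - τ (pA k q c c) * ((pA k q c c) ^ i * (pB k q c c) ^ j)
              = ((q ^ 2) ^ j + 1) • ((pA k q c c) ^ (i + 1) * (pB k q c c) ^ j) := by
            rw [e1, e3]; module
          exact cancel _ _ (coeffB j) (by rw [← heq]; exact hzero _ hmem)
      | zero =>
          cases j with
          | zero => exact absurd rfl hij
          | succ j =>
              have hmem := memN ((pB k q c c) ^ j) (pB k q c c)
              have heq : (pB k q c c) ^ j * pB k q c c - τ (pB k q c c) * (pB k q c c) ^ j
                  = (1 - l) • ((pA k q c c) ^ 0 * (pB k q c c) ^ (j + 1)) := by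
                rw [hτB, smul_mul_assoc, ← pow_succ, ← pow_succ', pow_zero, one_mul]
                module
              have hcoeff : (1 : k) - l ≠ 0 := sub_ne_zero.mpr (Ne.symm hl1)
              exact cancel _ _ hcoeff (by rw [← heq]; exact hzero _ hmem)
    have vBs : ∀ i j : ℕ, i + j ≠ 0 → N.mkQ ((pA k q c c) ^ i * (pBs k q c c) ^ j) = 0 := by
      intro i j hij
      cases i with
      | succ i =>
          have hmem := memN ((pA k q c c) ^ i * (pBs k q c c) ^ j) (pA k q c c)
          have e2 : pA k q c c * ((pA k q c c) ^ i * (pBs k q c c) ^ j)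
              = (pA k q c c) ^ (i + 1) * (pBs k q c c) ^ j := by
            rw [← mul_assoc, ← pow_succ']
          have e1 : ((pA k q c c) ^ i * (pBs k q c c) ^ j) * pA k q c c
              = ((q⁻¹) ^ 2) ^ j • ((pA k q c c) ^ (i + 1) * (pBs k q c c) ^ j) := by
            rw [mul_assoc, pow_comm_aux (relBsA hq0) j, mul_smul_comm, ← mul_assoc,
              ← pow_succ]
          have e3 : τ (pA k q c c) * ((pA k q c c) ^ i * (pBs k q c c) ^ j)
              = -((pA k q c c) ^ (i + 1) * (pBs k q c c) ^ j) := by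
            calc τ (pA k q c c) * ((pA k q c c) ^ i * (pBs k q c c) ^ j)
                = (-(pA k q c c)) * ((pA k q c c) ^ i * (pBs k q c c) ^ j) := by rw [hτA]
              _ = -(pA k q c c * ((pA k q c c) ^ i * (pBs k q c c) ^ j)) :=
                  neg_mul (α := PodlesAlg k q c c) _ _
              _ = -((pA k q c c) ^ (i + 1) * (pBs k q c c) ^ j) := by rw [e2]
          have heq : ((pA k q c c) ^ i * (pBs k q c c) ^ j) * pA k q c c
              - τ (pA k q c c) * ((pA k q c c) ^ i * (pBs k q c c) ^ j)
              = (((q⁻¹) ^ 2) ^ j + 1) • ((pA k q c c) ^ (i + 1) * (pBs k q c c) ^ j) := by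
            rw [e1, e3]; module
          exact cancel _ _ (coeffBs j) (by rw [← heq]; exact hzero _ hmem)
      | zero =>
          cases j with
          | zero => exact absurd rfl hij
          | succ j =>
              have hmem := memN ((pBs k q c c) ^ j) (pBs k q c c)
              have heq : (pBs k q c c) ^ j * pBs k q c c
                  - τ (pBs k q c c) * (pBs k q c c) ^ j
                  = (1 - l⁻¹) • ((pA k q c c) ^ 0 * (pBs k q c c) ^ (j + 1)) := by
                rw [hτBs, smul_mul_assoc, ← pow_succ, ← pow_succ', pow_zero, one_mul]
                module
              have hcoeff : (1 : k) - l⁻¹ ≠ 0 := by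
                refine sub_ne_zero.mpr fun h => hl1 ?_
                rw [← inv_eq_one, ← h]
              exact cancel _ _ hcoeff (by rw [← heq]; exact hzero _ hmem)
    rw [Submodule.eq_top_iff']
    intro z
    obtain ⟨y, rfl⟩ := Submodule.mkQ_surjective N z
    have hy : y ∈ Submodule.span k
        ({x : PodlesAlg k q c c | ∃ i j : ℕ, x = pA k q c c ^ i * pB k q c c ^ j} ∪
         {x : PodlesAlg k q c c | ∃ i j : ℕ, x = pA k q c c ^ i * pBs k q c c ^ j}) := by
      rw [podles_span_top hq0]; trivial
    induction hy using Submodule.span_induction with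
    | mem x hx =>
        rcases hx with ⟨i, j, rfl⟩ | ⟨i, j, rfl⟩
        · rcases Nat.eq_zero_or_pos (i + j) with hij | hij
          · obtain ⟨rfl, rfl⟩ : i = 0 ∧ j = 0 := by omega
            simpa using Submodule.mem_span_singleton_self _
          · rw [vB i j (by omega)]; exact zero_mem _
        · rcases Nat.eq_zero_or_pos (i + j) with hij | hij
          · obtain ⟨rfl, rfl⟩ : i = 0 ∧ j = 0 := by omega
            simpa using Submodule.mem_span_singleton_self _
          · rw [vBs i j (by omega)]; exact zero_mem _
    | zero => rw [map_zero]; exact zero_mem _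
    | add a b _ _ ha hb => rw [map_add]; exact add_mem ha hb
    | smul t a _ ha => rw [map_smul]; exact Submodule.smul_mem _ _ ha
end

section
/- For σ = id on A = A(c,d), the class [A^m B^n] in HH_0(A) = A/[A,A] vanishes unless m = 0 or n = 0; similarly [A^m (B*)^n] = 0 unless m = 0 or n = 0. -/
lemma podles_BA (k : Type) [Field k] (q c d : k) :
    pB k q c d * pA k q c d = q ^ 2 • (pA k q c d * pB k q c d) := by
  have h := RingQuot.mkAlgHom_rel k (PodlesRel.BA : PodlesRel k q c d _ _)
  simpa [pA, pB, map_mul] using h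

lemma podles_ABs (k : Type) [Field k] (q c d : k) :
    pA k q c d * pBs k q c d = q ^ 2 • (pBs k q c d * pA k q c d) := by
  have h := RingQuot.mkAlgHom_rel k (PodlesRel.ABs : PodlesRel k q c d _ _)
  simpa [pA, pBs, map_mul] using h

lemma podles_BAm (k : Type) [Field k] (q c d : k) (m : ℕ) :
    pB k q c d * (pA k q c d) ^ m = q ^ (2 * m) • ((pA k q c d) ^ m * pB k q c d) := by
  induction m with
  | zero => simp
  | succ m ih =>
    rw [pow_succ', ← mul_assoc, podles_BA, smul_mul_assoc, mul_assoc, ih,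
      mul_smul_comm, smul_smul, ← pow_add, ← mul_assoc, ← pow_succ',
      show 2 + 2 * m = 2 * (m + 1) from by ring]

lemma podles_AmBs (k : Type) [Field k] (q c d : k) (m : ℕ) :
    (pA k q c d) ^ m * pBs k q c d = q ^ (2 * m) • (pBs k q c d * (pA k q c d) ^ m) := by
  induction m with
  | zero => simp
  | succ m ih =>
    rw [pow_succ', mul_assoc, ih, mul_smul_comm, ← mul_assoc, podles_ABs,
      smul_mul_assoc, smul_smul, mul_assoc, ← pow_add,
      show 2 * m + 2 = 2 * (m + 1) from by ring]

/-- For `σ = id` on `A = A(c,d)`, the class `[Aᵐ Bⁿ]` in `HH₀(A) = A/[A,A]` vanishes unless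
`m = 0` or `n = 0`; similarly `[Aᵐ (B*)ⁿ] = 0` unless `m = 0` or `n = 0`. -/
theorem podles_HH0_id_mixed_monomials (k : Type) [Field k] [CharZero k] (q c d : k)
    (hq0 : q ≠ 0) (hq : ∀ n : ℕ, 0 < n → q ^ n ≠ 1) (hcd : c + d ≠ 0)
    (N : Submodule k (PodlesAlg k q c d))
    (hN : N = Submodule.span k {x : PodlesAlg k q c d | ∃ a b, x = a * b - b * a}) :
    ∀ m n : ℕ, ¬(m = 0 ∨ n = 0) →
      N.mkQ ((pA k q c d) ^ m * (pB k q c d) ^ n) = 0 ∧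
      N.mkQ ((pA k q c d) ^ m * (pBs k q c d) ^ n) = 0 := by
  intro m n hmn
  push_neg at hmn
  obtain ⟨hm, hn⟩ := hmn
  obtain ⟨m, rfl⟩ := Nat.exists_eq_succ_of_ne_zero hm
  obtain ⟨n, rfl⟩ := Nat.exists_eq_succ_of_ne_zero hn
  have hqm : q ^ (2 * (m + 1)) - 1 ≠ 0 :=
    sub_ne_zero.mpr (hq (2 * (m + 1)) (by omega))
  have hq2m : q ^ (2 * (m + 1)) ≠ 0 := pow_ne_zero _ hq0
  have memN : ∀ a b : PodlesAlg k q c d, a * b - b * a ∈ N := by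
    intro a b
    rw [hN]
    exact Submodule.subset_span ⟨a, b, rfl⟩
  have hBA := podles_BAm k q c d (m + 1)
  have hABs := podles_AmBs k q c d (m + 1)
  set A := pA k q c d with hA
  set B := pB k q c d with hB
  set Bs := pBs k q c d with hBs
  constructor
  · rw [Submodule.mkQ_apply, Submodule.Quotient.mk_eq_zero]
    have hcomm : B * (A ^ (m + 1) * B ^ n) - (A ^ (m + 1) * B ^ n) * B
        = (q ^ (2 * (m + 1)) - 1) • (A ^ (m + 1) * B ^ (n + 1)) := by
      rw [← mul_assoc, hBA, smul_mul_assoc, mul_assoc, ← pow_succ', mul_assoc, ← pow_succ,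
        ]
      module
    have hx : A ^ (m + 1) * B ^ (n + 1)
        = (q ^ (2 * (m + 1)) - 1)⁻¹ •
          (B * (A ^ (m + 1) * B ^ n) - (A ^ (m + 1) * B ^ n) * B) := by
      rw [hcomm, smul_smul, inv_mul_cancel₀ hqm, one_smul]
    rw [hx]
    exact N.smul_mem _ (memN _ _)
  · rw [Submodule.mkQ_apply, Submodule.Quotient.mk_eq_zero]
    have hBsA : Bs * A ^ (m + 1) = (q ^ (2 * (m + 1)))⁻¹ • (A ^ (m + 1) * Bs) := by
      rw [hABs, inv_smul_smul₀ hq2m]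
    have hne' : (1 : k) - (q ^ (2 * (m + 1)))⁻¹ ≠ 0 := by
      rw [sub_ne_zero]
      intro h
      exact hq (2 * (m + 1)) (by omega) (inv_eq_one.mp h.symm)
    have hcomm : (A ^ (m + 1) * Bs ^ n) * Bs - Bs * (A ^ (m + 1) * Bs ^ n)
        = ((1 : k) - (q ^ (2 * (m + 1)))⁻¹) • (A ^ (m + 1) * Bs ^ (n + 1)) := by
      rw [← mul_assoc Bs, hBsA, smul_mul_assoc, mul_assoc, ← pow_succ, mul_assoc, ← pow_succ',
        ]
      module
    have hx : A ^ (m + 1) * Bs ^ (n + 1)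
        = ((1 : k) - (q ^ (2 * (m + 1)))⁻¹)⁻¹ •
          ((A ^ (m + 1) * Bs ^ n) * Bs - Bs * (A ^ (m + 1) * Bs ^ n)) := by
      rw [hcomm, smul_smul, inv_mul_cancel₀ hne', one_smul]
    rw [hx]
    exact N.smul_mem _ (memN _ _)
end

section
/- In HH_0^σ(A(S_q^2)) with σ(A) = A, σ(B) = q^2 B, σ(B*) = q^{-2}B*, the relation (1 − q^{2s+4})[A^{s+1}] = (1 − q^4)[A] holds for all s ≥ 0. -/
section aux
variable (q : ℂ)

lemma my_relABs : pA ℂ q 1 0 * pBs ℂ q 1 0 = q ^ 2 • (pBs ℂ q 1 0 * pA ℂ q 1 0) := by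
  have := RingQuot.mkAlgHom_rel ℂ (PodlesRel.ABs : PodlesRel ℂ q 1 0 _ _)
  simpa [pA, pBs, map_mul, map_smul] using this

lemma my_relBsB : pBs ℂ q 1 0 * pB ℂ q 1 0 = pA ℂ q 1 0 - pA ℂ q 1 0 ^ 2 := by
  have := RingQuot.mkAlgHom_rel ℂ (PodlesRel.BsB : PodlesRel ℂ q 1 0 _ _)
  simpa [pA, pB, pBs, map_mul, map_smul, map_sub, map_add, map_pow] using this

lemma my_relBBs : pB ℂ q 1 0 * pBs ℂ q 1 0 =
    q ^ 2 • pA ℂ q 1 0 - q ^ 4 • pA ℂ q 1 0 ^ 2 := by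
  have := RingQuot.mkAlgHom_rel ℂ (PodlesRel.BBs : PodlesRel ℂ q 1 0 _ _)
  simpa [pA, pB, pBs, map_mul, map_smul, map_sub, map_add, map_pow] using this

lemma my_pow_Bs : ∀ s : ℕ, pA ℂ q 1 0 ^ s * pBs ℂ q 1 0 =
    q ^ (2 * s) • (pBs ℂ q 1 0 * pA ℂ q 1 0 ^ s) := by
  intro s
  induction s with
  | zero => simp
  | succ n ih =>
    calc pA ℂ q 1 0 ^ (n + 1) * pBs ℂ q 1 0
        = pA ℂ q 1 0 ^ n * (pA ℂ q 1 0 * pBs ℂ q 1 0) := by rw [pow_succ, mul_assoc]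
      _ = q ^ 2 • (pA ℂ q 1 0 ^ n * pBs ℂ q 1 0 * pA ℂ q 1 0) := by
          rw [my_relABs, mul_smul_comm, mul_assoc]
      _ = q ^ 2 • (q ^ (2 * n) • (pBs ℂ q 1 0 * pA ℂ q 1 0 ^ n * pA ℂ q 1 0)) := by
          rw [ih, smul_mul_assoc]
      _ = q ^ (2 * (n + 1)) • (pBs ℂ q 1 0 * pA ℂ q 1 0 ^ (n + 1)) := by
          rw [smul_smul, ← pow_add, mul_assoc, ← pow_succ]
          congr 1
          ring

end aux

/-- In `HH₀^σ(A(S²_q))` (for the standard Podleś sphere `A(1,0)`) with `σ(A) = A`,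
`σ(B) = q²B`, `σ(B*) = q⁻²B*`, the relation `(1 − q^{2s+4})[A^{s+1}] = (1 − q⁴)[A]` holds for
all `s ≥ 0`. -/
theorem standard_podles_HH0_relation (q : ℝ) (hq0 : 0 < q) (hq1 : q < 1)
    (σ : PodlesAlg ℂ (q : ℂ) 1 0 ≃ₐ[ℂ] PodlesAlg ℂ (q : ℂ) 1 0)
    (hσA : σ (pA ℂ (q : ℂ) 1 0) = pA ℂ (q : ℂ) 1 0)
    (hσB : σ (pB ℂ (q : ℂ) 1 0) = ((q : ℂ) ^ 2) • pB ℂ (q : ℂ) 1 0)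
    (hσBs : σ (pBs ℂ (q : ℂ) 1 0) = ((q : ℂ) ^ 2)⁻¹ • pBs ℂ (q : ℂ) 1 0)
    (N : Submodule ℂ (PodlesAlg ℂ (q : ℂ) 1 0))
    (hN : N = Submodule.span ℂ {x : PodlesAlg ℂ (q : ℂ) 1 0 | ∃ a b, x = a * b - σ b * a}) :
    ∀ s : ℕ, (1 - (q : ℂ) ^ (2 * s + 4)) • N.mkQ ((pA ℂ (q : ℂ) 1 0) ^ (s + 1)) =
      (1 - (q : ℂ) ^ 4) • N.mkQ (pA ℂ (q : ℂ) 1 0) := by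
  set A := pA ℂ (q : ℂ) 1 0 with hA
  set B := pB ℂ (q : ℂ) 1 0 with hB
  set Bs := pBs ℂ (q : ℂ) 1 0 with hBs
  -- the key HH₀ relation from the commutator with `B*` and `B A^s`
  have key : ∀ s : ℕ,
      N.mkQ (A ^ (s + 1)) - N.mkQ (A ^ (s + 2)) =
        (q : ℂ) ^ (2 * s + 4) • N.mkQ (A ^ (s + 1)) -
          (q : ℂ) ^ (2 * s + 6) • N.mkQ (A ^ (s + 2)) := by
    intro s
    have hmem : Bs * (B * A ^ s) - σ (B * A ^ s) * Bs ∈ N := by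
      rw [hN]
      exact Submodule.subset_span ⟨Bs, B * A ^ s, rfl⟩
    have hq0' : N.mkQ (Bs * (B * A ^ s)) = N.mkQ (σ (B * A ^ s) * Bs) :=
      (Submodule.Quotient.eq N).2 hmem
    have hL : Bs * (B * A ^ s) = A ^ (s + 1) - A ^ (s + 2) := by
      rw [← mul_assoc, my_relBsB, sub_mul, ← pow_succ', ← pow_add, add_comm 2 s]
    have hR : σ (B * A ^ s) * Bs =
        (q : ℂ) ^ (2 * s + 4) • A ^ (s + 1) - (q : ℂ) ^ (2 * s + 6) • A ^ (s + 2) := by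
      have hσAs : σ (A ^ s) = A ^ s := by rw [map_pow, hσA]
      rw [map_mul, hσB, hσAs, smul_mul_assoc, smul_mul_assoc, mul_assoc,
        my_pow_Bs, mul_smul_comm, smul_smul, ← mul_assoc, my_relBBs,
        sub_mul, smul_mul_assoc, smul_mul_assoc, ← pow_succ',
        ← pow_add (pA ℂ (q : ℂ) 1 0) 2 s, add_comm 2 s,
        smul_sub, smul_smul, smul_smul]
      congr 2 <;> ring
    rw [hL] at hq0'
    rw [hR] at hq0'
    rw [map_sub, map_sub, map_smul, map_smul] at hq0'
    exact hq0'
  intro s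
  induction s with
  | zero => norm_num
  | succ n ih =>
    have h := key n
    have h2 : (1 - (q : ℂ) ^ (2 * n + 4)) • N.mkQ (A ^ (n + 1)) =
        (1 - (q : ℂ) ^ (2 * n + 6)) • N.mkQ (A ^ (n + 2)) := by
      rw [sub_smul, sub_smul, one_smul, one_smul]
      linear_combination (norm := module) h
    have : 2 * (n + 1) + 4 = 2 * n + 6 := by ring
    rw [this, show n + 1 + 1 = n + 2 from rfl, ← h2, ih]
end

section
/- The twisted Hochschild 2-chain ω_2 = 2[A^{b+1} ⊗ B ⊗ B* − A^{b+1} ⊗ B* ⊗ B + 2 A^b B ⊗ B* ⊗ A − 2q^{-2} A^b B ⊗ A ⊗ B*] + 2(q^4 − 1) A^{b+1} ⊗ A ⊗ A + (1 − q^{-2})cd(c−d) A^b ⊗ 1 ⊗ 1 + (c−d)[A^b ⊗ B* ⊗ B − q^{-2} A^b ⊗ B ⊗ B* + (1−q^2) A^b ⊗ A ⊗ A] satisfies b_σ(ω_2) = 0 in A(c,d)^{⊗2}, where σ = σ_λ with λ = q^{-(2b+2)}. -/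
open scoped TensorProduct

/-- The `σ`-twisted Hochschild boundary `b_σ` evaluated on an elementary tensor
`x ⊗ y ⊗ z`: `b_σ(x ⊗ y ⊗ z) = xy ⊗ z − x ⊗ yz + σ(z)x ⊗ y`. -/
noncomputable def bt (k R : Type) [Field k] [Ring R] [Algebra k R] (σ : R ≃ₐ[k] R) (x y z : R) :
    R ⊗[k] R :=
  ((x * y) ⊗ₜ[k] z) - (x ⊗ₜ[k] (y * z)) + ((σ z * x) ⊗ₜ[k] y)

/-- The twisted Hochschild 2-chain
`ω₂ = 2[A^{b+1} ⊗ B ⊗ B* − A^{b+1} ⊗ B* ⊗ B + 2 AᵇB ⊗ B* ⊗ A − 2q⁻² AᵇB ⊗ A ⊗ B*]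
  + 2(q⁴−1) A^{b+1} ⊗ A ⊗ A + (1−q⁻²)cd(c−d) Aᵇ ⊗ 1 ⊗ 1
  + (c−d)[Aᵇ ⊗ B* ⊗ B − q⁻² Aᵇ ⊗ B ⊗ B* + (1−q²) Aᵇ ⊗ A ⊗ A]`
satisfies `b_σ(ω₂) = 0`, where `σ = σ_λ` with `λ = q^{-(2b+2)}`
(`σ(A) = A`, `σ(B) = λB`, `σ(B*) = λ⁻¹B*`). -/
theorem omega2_is_cycle (k R : Type) [Field k] [CharZero k] [Ring R] [Algebra k R]
    (q c d : k) (hq0 : q ≠ 0) (hq : ∀ n : ℕ, 0 < n → q ^ n ≠ 1) (hcd : c + d ≠ 0)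
    (A B Bs : R)
    (rBA : B * A = (q ^ 2) • (A * B))
    (rABs : A * Bs = (q ^ 2) • (Bs * A))
    (rBsB : Bs * B = algebraMap k R (c * d) + (c - d) • A - A ^ 2)
    (rBBs : B * Bs = algebraMap k R (c * d) + (q ^ 2 * (c - d)) • A - (q ^ 4) • A ^ 2)
    (b : ℕ) (σ : R ≃ₐ[k] R)
    (hσA : σ A = A) (hσB : σ B = (q ^ (2 * b + 2))⁻¹ • B)
    (hσBs : σ Bs = (q ^ (2 * b + 2)) • Bs) :
    (2 : k) • bt k R σ (A ^ (b + 1)) B Bs - (2 : k) • bt k R σ (A ^ (b + 1)) Bs B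
      + (4 : k) • bt k R σ (A ^ b * B) Bs A
      - (4 * (q ^ 2)⁻¹) • bt k R σ (A ^ b * B) A Bs
      + (2 * (q ^ 4 - 1)) • bt k R σ (A ^ (b + 1)) A A
      + ((1 - (q ^ 2)⁻¹) * (c * d) * (c - d)) • bt k R σ (A ^ b) 1 1
      + (c - d) • (bt k R σ (A ^ b) Bs B - (q ^ 2)⁻¹ • bt k R σ (A ^ b) B Bs
          + (1 - q ^ 2) • bt k R σ (A ^ b) A A)
      = 0 := by
  have hq2 : q ^ 2 ≠ 0 := pow_ne_zero _ hq0
  have hqb : q ^ (2 * b) ≠ 0 := pow_ne_zero _ hq0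
  have hqb2 : q ^ (2 * b + 2) ≠ 0 := pow_ne_zero _ hq0
  -- commutation of B, Bs with powers of A
  have hBA : ∀ n : ℕ, B * A ^ n = (q ^ (2 * n)) • (A ^ n * B) := by
    intro n
    induction n with
    | zero => simp
    | succ n ih =>
      rw [pow_succ, ← mul_assoc, ih, smul_mul_assoc, mul_assoc, rBA, mul_smul_comm,
        smul_smul, ← mul_assoc, ← pow_add]
      have : 2 * n + 2 = 2 * (n + 1) := by ring
      rw [this]
  have hABs : ∀ n : ℕ, A ^ n * Bs = (q ^ (2 * n)) • (Bs * A ^ n) := by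
    intro n
    induction n with
    | zero => simp
    | succ n ih =>
      rw [pow_succ, mul_assoc, rABs, mul_smul_comm, ← mul_assoc, ih, smul_mul_assoc,
        smul_smul, mul_assoc, ← pow_add]
      have : 2 + 2 * n = 2 * (n + 1) := by ring
      rw [this]
  have hBsA : ∀ n : ℕ, Bs * A ^ n = (q ^ (2 * n))⁻¹ • (A ^ n * Bs) := by
    intro n
    rw [hABs n, smul_smul, inv_mul_cancel₀ (pow_ne_zero _ hq0), one_smul]
  have epow : q ^ (2 * b + 2) = q ^ (2 * b) * q ^ 2 := pow_add q (2 * b) 2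
  -- rewriting algebraMap
  have hAM : algebraMap k R (c * d) = (c * d) • (1 : R) := Algebra.algebraMap_eq_smul_one _
  -- exponent bookkeeping
  have e1 : 2 * (b + 1) = 2 * b + 2 := by ring
  -- key product normal forms
  have p1 : σ Bs * A ^ (b + 1) = A ^ (b + 1) * Bs := by
    rw [hσBs, smul_mul_assoc, eq_comm, hABs (b + 1), e1]
  have p2 : σ B * A ^ (b + 1) = A ^ (b + 1) * B := by
    rw [hσB, smul_mul_assoc, hBA (b + 1), e1, smul_smul, inv_mul_cancel₀ hqb2, one_smul]
  have p3 : σ A * (A ^ b * B) = A ^ (b + 1) * B := by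
    rw [hσA, ← mul_assoc, ← pow_succ']
  have p4 : (A ^ b * B) * Bs
      = (c * d) • A ^ b + (q ^ 2 * (c - d)) • A ^ (b + 1) - (q ^ 4) • A ^ (b + 2) := by
    rw [mul_assoc, rBBs, hAM]
    simp only [mul_sub, mul_add, mul_smul_comm, mul_one, ← pow_succ, ← pow_add]
  have p5 : (A ^ b * B) * A = (q ^ 2) • (A ^ (b + 1) * B) := by
    rw [mul_assoc, rBA, mul_smul_comm, ← mul_assoc, ← pow_succ]
  have p6 : σ Bs * (A ^ b * B)
      = (q ^ 2 * (c * d)) • A ^ b + (q ^ 2 * (c - d)) • A ^ (b + 1)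
        - (q ^ 2) • A ^ (b + 2) := by
    rw [hσBs, smul_mul_assoc, ← mul_assoc, hBsA b, smul_mul_assoc, smul_smul, mul_assoc,
      rBsB, hAM]
    simp only [mul_sub, mul_add, mul_smul_comm, mul_one, ← pow_succ, ← pow_add,
      smul_sub, smul_add, smul_smul]
    match_scalars <;> (rw [epow]; field_simp; try ring)
  have p7 : σ B * A ^ b = (q ^ 2)⁻¹ • (A ^ b * B) := by
    rw [hσB, smul_mul_assoc, hBA b, smul_smul]
    congr 1
    rw [epow]
    field_simp
  have p8 : σ Bs * A ^ b = (q ^ 2) • (A ^ b * Bs) := by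
    rw [hσBs, smul_mul_assoc, hBsA b, smul_smul]
    congr 1
    rw [epow]
    field_simp
  have p9 : Bs * A = (q ^ 2)⁻¹ • (A * Bs) := by
    rw [rABs, smul_smul, inv_mul_cancel₀ hq2, one_smul]
  have pA1 : σ A * A ^ (b + 1) = A ^ (b + 2) := by
    rw [hσA, ← pow_succ']
  have pA2 : σ A * A ^ b = A ^ (b + 1) := by
    rw [hσA, ← pow_succ']
  have pSone : σ (1 : R) = 1 := map_one σ
  have H1 : bt k R σ (A ^ (b + 1)) B Bs
      = (A ^ (b + 1) * B) ⊗ₜ[k] Bs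
        - ((c * d) • ((A ^ (b + 1)) ⊗ₜ[k] (1 : R)) + (q ^ 2 * (c - d)) • ((A ^ (b + 1)) ⊗ₜ[k] A)
          - (q ^ 4) • ((A ^ (b + 1)) ⊗ₜ[k] (A ^ 2)))
        + (A ^ (b + 1) * Bs) ⊗ₜ[k] B := by
    simp only [bt, p1, rBBs, hAM, TensorProduct.tmul_add, TensorProduct.tmul_sub,
      TensorProduct.tmul_smul]
  have H2 : bt k R σ (A ^ (b + 1)) Bs B
      = (A ^ (b + 1) * Bs) ⊗ₜ[k] B
        - ((c * d) • ((A ^ (b + 1)) ⊗ₜ[k] (1 : R)) + (c - d) • ((A ^ (b + 1)) ⊗ₜ[k] A)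
          - (A ^ (b + 1)) ⊗ₜ[k] (A ^ 2))
        + (A ^ (b + 1) * B) ⊗ₜ[k] Bs := by
    simp only [bt, p2, rBsB, hAM, TensorProduct.tmul_add, TensorProduct.tmul_sub,
      TensorProduct.tmul_smul]
  have H3 : bt k R σ (A ^ b * B) Bs A
      = ((c * d) • ((A ^ b) ⊗ₜ[k] A) + (q ^ 2 * (c - d)) • ((A ^ (b + 1)) ⊗ₜ[k] A)
          - (q ^ 4) • ((A ^ (b + 2)) ⊗ₜ[k] A))
        - (q ^ 2)⁻¹ • ((A ^ b * B) ⊗ₜ[k] (A * Bs))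
        + (A ^ (b + 1) * B) ⊗ₜ[k] Bs := by
    simp only [bt, p4, p9, p3, TensorProduct.add_tmul, TensorProduct.sub_tmul,
      ← TensorProduct.smul_tmul', TensorProduct.tmul_smul]
  have H4 : bt k R σ (A ^ b * B) A Bs
      = (q ^ 2) • ((A ^ (b + 1) * B) ⊗ₜ[k] Bs)
        - (A ^ b * B) ⊗ₜ[k] (A * Bs)
        + ((q ^ 2 * (c * d)) • ((A ^ b) ⊗ₜ[k] A) + (q ^ 2 * (c - d)) • ((A ^ (b + 1)) ⊗ₜ[k] A)
          - (q ^ 2) • ((A ^ (b + 2)) ⊗ₜ[k] A)) := by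
    simp only [bt, p5, p6, TensorProduct.add_tmul, TensorProduct.sub_tmul,
      ← TensorProduct.smul_tmul']
  have H5 : bt k R σ (A ^ (b + 1)) A A
      = (A ^ (b + 2)) ⊗ₜ[k] A - (A ^ (b + 1)) ⊗ₜ[k] (A ^ 2) + (A ^ (b + 2)) ⊗ₜ[k] A := by
    simp only [bt, pA1, ← pow_succ, ← pow_two]
  have H6 : bt k R σ (A ^ b) 1 1 = (A ^ b) ⊗ₜ[k] (1 : R) := by
    simp only [bt, pSone, mul_one, one_mul]
    abel
  have H7 : bt k R σ (A ^ b) Bs B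
      = (A ^ b * Bs) ⊗ₜ[k] B
        - ((c * d) • ((A ^ b) ⊗ₜ[k] (1 : R)) + (c - d) • ((A ^ b) ⊗ₜ[k] A) - (A ^ b) ⊗ₜ[k] (A ^ 2))
        + (q ^ 2)⁻¹ • ((A ^ b * B) ⊗ₜ[k] Bs) := by
    simp only [bt, p7, rBsB, hAM, TensorProduct.tmul_add, TensorProduct.tmul_sub,
      TensorProduct.tmul_smul, ← TensorProduct.smul_tmul']
  have H8 : bt k R σ (A ^ b) B Bs
      = (A ^ b * B) ⊗ₜ[k] Bs
        - ((c * d) • ((A ^ b) ⊗ₜ[k] (1 : R)) + (q ^ 2 * (c - d)) • ((A ^ b) ⊗ₜ[k] A)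
          - (q ^ 4) • ((A ^ b) ⊗ₜ[k] (A ^ 2)))
        + (q ^ 2) • ((A ^ b * Bs) ⊗ₜ[k] B) := by
    simp only [bt, p8, rBBs, hAM, TensorProduct.tmul_add, TensorProduct.tmul_sub,
      TensorProduct.tmul_smul, ← TensorProduct.smul_tmul']
  have H9 : bt k R σ (A ^ b) A A
      = (A ^ (b + 1)) ⊗ₜ[k] A - (A ^ b) ⊗ₜ[k] (A ^ 2) + (A ^ (b + 1)) ⊗ₜ[k] A := by
    simp only [bt, pA2, ← pow_succ, ← pow_two]
  rw [H1, H2, H3, H4, H5, H6, H7, H8, H9]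
  match_scalars <;> (field_simp; try ring)
end
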